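/- arXiv:1907.09366 — 2 statements merged into one kernel-verified Lean document; each statement's English description precedes it below -/
import Mathlib

section
/- Let g be either the identity function on the open unit disc 𝔻 or an elliptic Möbius transformation fixing 𝔻, and let g₁, g₂, … be non-constant holomorphic self-maps of 𝔻 such that Σₙ ρ(gₙ(a), g(a)) < ∞ and Σₙ ρ(gₙ(b), g(b)) < ∞ for two distinct points a, b ∈ 𝔻. Then the sequence (Gₙ ∘ g⁻ⁿ), where Gₙ = g₁ ∘ g₂ ∘ ⋯ ∘ gₙ, converges locally uniformly on 𝔻 to a non-constant holomorphic self-map of 𝔻. -/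
open Complex Set Filter Metric

/-- The open unit disc in the complex plane. -/
def unitDisc : Set ℂ := {z : ℂ | ‖z‖ < 1}

/-- Inverse hyperbolic tangent. -/
noncomputable def artanh (x : ℝ) : ℝ := (1 / 2) * Real.log ((1 + x) / (1 - x))

/-- The hyperbolic distance on the unit disc, induced by the Riemannian metric
`2|dz|/(1-|z|²)`. -/
noncomputable def hdist (z w : ℂ) : ℝ :=
  2 * artanh ‖(z - w) / (1 - (starRingEnd ℂ) w * z)‖

/-- Left compositions: `leftComp f n = f (n-1) ∘ ⋯ ∘ f 1 ∘ f 0`, so that `f k`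
plays the role of the `(k+1)`-st map `f_{k+1}` of the sequence. -/
def leftComp (f : ℕ → ℂ → ℂ) : ℕ → ℂ → ℂ
  | 0 => id
  | n + 1 => f n ∘ leftComp f n

/-- Right compositions: `rightComp g n = g 0 ∘ g 1 ∘ ⋯ ∘ g (n-1)`, so that `g k`
plays the role of the `(k+1)`-st map `g_{k+1}` of the sequence. -/
def rightComp (g : ℕ → ℂ → ℂ) : ℕ → ℂ → ℂ
  | 0 => id
  | n + 1 => rightComp g n ∘ g n

open Topology

/-- compatibility: the complex absolute value as a bundled absolute value -/
noncomputable def Complex.abs : AbsoluteValue ℂ ℝ := NormedField.toAbsoluteValue ℂ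

@[simp] lemma Complex.norm_eq_abs (z : ℂ) : ‖z‖ = Complex.abs z := rfl

lemma Complex.abs_apply' (z : ℂ) : Complex.abs z = ‖z‖ := rfl

@[simp] lemma Complex.abs_conj (z : ℂ) : Complex.abs ((starRingEnd ℂ) z) = Complex.abs z := by
  rw [Complex.abs_apply', Complex.abs_apply']; exact Complex.norm_conj z

@[simp] lemma Complex.abs_ofReal (r : ℝ) : Complex.abs (r : ℂ) = |r| := by
  rw [Complex.abs_apply']; exact Complex.norm_real r

@[simp] lemma Complex.abs_two : Complex.abs 2 = 2 := by
  rw [Complex.abs_apply']; norm_num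

@[simp] lemma Complex.abs_I : Complex.abs Complex.I = 1 := by
  rw [Complex.abs_apply']; exact Complex.norm_I

lemma Complex.sq_abs (z : ℂ) : Complex.abs z ^ 2 = Complex.normSq z := by
  rw [Complex.abs_apply']; exact Complex.sq_norm z

lemma Complex.abs_re_le_abs (z : ℂ) : |z.re| ≤ Complex.abs z := by
  rw [Complex.abs_apply']; exact Complex.abs_re_le_norm z

lemma Complex.continuous_abs : Continuous Complex.abs := continuous_norm

lemma Complex.abs.continuous : Continuous Complex.abs := continuous_norm

lemma Complex.abs_le_abs_of_mapsTo_ball_self {f : ℂ → ℂ} {R : ℝ} {z : ℂ}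
    (hd : DifferentiableOn ℂ f (Metric.ball 0 R))
    (h_maps : MapsTo f (Metric.ball 0 R) (Metric.ball 0 R)) (h₀ : f 0 = 0)
    (hz : Complex.abs z < R) : Complex.abs (f z) ≤ Complex.abs z :=
  norm_le_norm_of_mapsTo_ball hd (h_maps.mono_right Metric.ball_subset_closedBall) h₀ hz

set_option maxHeartbeats 1600000

/-- pseudo-hyperbolic distance -/
noncomputable def pd (z w : ℂ) : ℝ := Complex.abs ((z - w) / (1 - (starRingEnd ℂ) w * z))

/-- Möbius map sending `a` to `0`. -/
noncomputable def mo (a z : ℂ) : ℂ := (z - a) / (1 - (starRingEnd ℂ) a * z)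

lemma mem_D {z : ℂ} : z ∈ unitDisc ↔ Complex.abs z < 1 := Iff.rfl

lemma D_eq_ball : unitDisc = Metric.ball (0 : ℂ) 1 := by
  ext z; simp [unitDisc, Metric.mem_ball, Complex.dist_eq]

lemma D_isOpen : IsOpen unitDisc := by rw [D_eq_ball]; exact isOpen_ball

lemma D_preconnected : IsPreconnected unitDisc := by
  rw [D_eq_ball]; exact (convex_ball _ _).isPreconnected

lemma one_sub_ne {x : ℂ} (hx : Complex.abs x < 1) : (1 : ℂ) - x ≠ 0 := by
  intro h
  have hx1 : x = 1 := by linear_combination -h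
  rw [hx1] at hx; simp at hx

lemma denom_ne {z w : ℂ} (hz : Complex.abs z < 1) (hw : Complex.abs w < 1) :
    (1 : ℂ) - (starRingEnd ℂ) w * z ≠ 0 := by
  apply one_sub_ne
  rw [map_mul, Complex.abs_conj]
  nlinarith [Complex.abs.nonneg w, Complex.abs.nonneg z]

lemma abs_one_sub_le {x : ℂ} : Complex.abs (1 - x) ≤ 1 + Complex.abs x := by
  calc Complex.abs (1 - x) ≤ Complex.abs 1 + Complex.abs (-x) := by
        simpa [sub_eq_add_neg] using Complex.abs.add_le 1 (-x)
    _ = 1 + Complex.abs x := by simp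

lemma abs_one_sub_ge {x : ℂ} : 1 - Complex.abs x ≤ Complex.abs (1 - x) := by
  have := Complex.abs.add_le (1 - x) x
  simp only [sub_add_cancel] at this
  simp at this ⊢; linarith

lemma denom_lower {z w : ℂ} :
    1 - Complex.abs w * Complex.abs z ≤ Complex.abs (1 - (starRingEnd ℂ) w * z) := by
  have := abs_one_sub_ge (x := (starRingEnd ℂ) w * z)
  rwa [map_mul, Complex.abs_conj] at this

lemma denom_pos {z w : ℂ} (hz : Complex.abs z < 1) (hw : Complex.abs w < 1) :
    0 < Complex.abs (1 - (starRingEnd ℂ) w * z) :=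
  Complex.abs.pos (denom_ne hz hw)

lemma normSq_identity (z w : ℂ) :
    Complex.normSq (1 - (starRingEnd ℂ) w * z) - Complex.normSq (z - w)
      = (1 - Complex.normSq z) * (1 - Complex.normSq w) := by
  simp only [Complex.normSq_apply, Complex.sub_re, Complex.sub_im, Complex.mul_re,
    Complex.mul_im, Complex.one_re, Complex.one_im, Complex.conj_re, Complex.conj_im]
  ring

lemma pd_def (z w : ℂ) :
    pd z w = Complex.abs (z - w) / Complex.abs (1 - (starRingEnd ℂ) w * z) := by
  rw [pd, map_div₀]

lemma pd_nonneg (z w : ℂ) : 0 ≤ pd z w := Complex.abs.nonneg _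

lemma pd_self (z : ℂ) : pd z z = 0 := by simp [pd]

lemma abs_sub_lt_denom {z w : ℂ} (hz : Complex.abs z < 1) (hw : Complex.abs w < 1) :
    Complex.abs (z - w) < Complex.abs (1 - (starRingEnd ℂ) w * z) := by
  have h1 : Complex.normSq (z - w) < Complex.normSq (1 - (starRingEnd ℂ) w * z) := by
    have := normSq_identity z w
    have hz2 : Complex.normSq z < 1 := by rw [← Complex.sq_abs]; nlinarith [Complex.abs.nonneg z]
    have hw2 : Complex.normSq w < 1 := by rw [← Complex.sq_abs]; nlinarith [Complex.abs.nonneg w]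
    nlinarith
  have h2 : Complex.abs (z - w) ^ 2 < Complex.abs (1 - (starRingEnd ℂ) w * z) ^ 2 := by
    rwa [Complex.sq_abs, Complex.sq_abs]
  nlinarith [Complex.abs.nonneg (z - w), Complex.abs.nonneg (1 - (starRingEnd ℂ) w * z)]

lemma pd_lt_one {z w : ℂ} (hz : Complex.abs z < 1) (hw : Complex.abs w < 1) : pd z w < 1 := by
  rw [pd_def]
  exact (div_lt_one (denom_pos hz hw)).2 (abs_sub_lt_denom hz hw)

lemma pd_symm (z w : ℂ) : pd z w = pd w z := by
  have h : Complex.abs (1 - (starRingEnd ℂ) z * w) = Complex.abs (1 - (starRingEnd ℂ) w * z) := by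
    rw [← Complex.abs_conj (1 - (starRingEnd ℂ) w * z)]
    congr 1
    simp only [map_sub, map_mul, Complex.conj_conj, map_one]
    ring
  rw [pd_def, pd_def, h, Complex.abs.map_sub z w]

lemma pd_eq_zero_iff {z w : ℂ} (hz : Complex.abs z < 1) (hw : Complex.abs w < 1) :
    pd z w = 0 ↔ z = w := by
  rw [pd_def, div_eq_zero_iff]
  constructor
  · rintro (h | h)
    · rwa [map_eq_zero, sub_eq_zero] at h
    · exact absurd h (ne_of_gt (denom_pos hz hw))
  · intro h; left; rw [h, sub_self, map_zero]

lemma pd_zero_right (z : ℂ) : pd z 0 = Complex.abs z := by simp [pd]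

lemma abs_mo (a z : ℂ) : Complex.abs (mo a z) = pd z a := rfl

lemma mo_mem {a z : ℂ} (ha : Complex.abs a < 1) (hz : Complex.abs z < 1) :
    Complex.abs (mo a z) < 1 := by rw [abs_mo]; exact pd_lt_one hz ha

lemma mo_self (a : ℂ) : mo a a = 0 := by simp [mo]

lemma mo_zero (a : ℂ) : mo a 0 = -a := by simp [mo]

lemma mo_diff {a : ℂ} (ha : Complex.abs a < 1) : DifferentiableOn ℂ (mo a) unitDisc := by
  apply DifferentiableOn.div
  · exact (differentiable_id.sub_const a).differentiableOn
  · exact ((differentiable_const _).mul differentiable_id).const_sub 1 |>.differentiableOn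
  · intro z hz; exact denom_ne (mem_D.1 hz) ha

lemma mo_inv {a z : ℂ} (ha : Complex.abs a < 1) (hz : Complex.abs z < 1) :
    mo (-a) (mo a z) = z := by
  have h1 : (1 : ℂ) - (starRingEnd ℂ) a * z ≠ 0 := denom_ne hz ha
  have h2 : (1 : ℂ) - (starRingEnd ℂ) a * a ≠ 0 := denom_ne ha ha
  have h1' : (1 : ℂ) - z * (starRingEnd ℂ) a ≠ 0 := by rwa [mul_comm]
  have h2' : (1 : ℂ) - a * (starRingEnd ℂ) a ≠ 0 := by rwa [mul_comm]
  have hX : mo a z - (-a) = z * (1 - (starRingEnd ℂ) a * a) / (1 - (starRingEnd ℂ) a * z) := by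
    rw [mo]; field_simp; ring
  have hY : (1 : ℂ) - (starRingEnd ℂ) (-a) * mo a z
      = (1 - (starRingEnd ℂ) a * a) / (1 - (starRingEnd ℂ) a * z) := by
    rw [mo, map_neg]; field_simp; ring
  rw [mo, hX, hY]
  rw [div_div_div_eq]
  field_simp

lemma pd_mobius {a z w : ℂ} (ha : Complex.abs a < 1) (hz : Complex.abs z < 1)
    (hw : Complex.abs w < 1) : pd (mo a z) (mo a w) = pd z w := by
  have h1 : (1 : ℂ) - (starRingEnd ℂ) a * z ≠ 0 := denom_ne hz ha
  have h2 : (1 : ℂ) - (starRingEnd ℂ) a * w ≠ 0 := denom_ne hw ha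
  have h3 : (1 : ℂ) - (starRingEnd ℂ) a * a ≠ 0 := denom_ne ha ha
  have h4 : (1 : ℂ) - a * (starRingEnd ℂ) w ≠ 0 := by
    apply one_sub_ne
    rw [map_mul, Complex.abs_conj]
    nlinarith [Complex.abs.nonneg a, Complex.abs.nonneg w]
  have h5 : (1 : ℂ) - (starRingEnd ℂ) w * z ≠ 0 := denom_ne hz hw
  have h1' : (1 : ℂ) - z * (starRingEnd ℂ) a ≠ 0 := by rwa [mul_comm]
  have h2' : (1 : ℂ) - w * (starRingEnd ℂ) a ≠ 0 := by rwa [mul_comm]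
  have h3' : (1 : ℂ) - a * (starRingEnd ℂ) a ≠ 0 := by rwa [mul_comm]
  have h5' : (1 : ℂ) - z * (starRingEnd ℂ) w ≠ 0 := by rwa [mul_comm]
  have h4' : (1 : ℂ) - (starRingEnd ℂ) w * a ≠ 0 := by rwa [mul_comm]
  have id1 : mo a z - mo a w
      = ((z - w) * (1 - (starRingEnd ℂ) a * a)) / ((1 - (starRingEnd ℂ) a * z) * (1 - (starRingEnd ℂ) a * w)) := by
    rw [mo, mo]; field_simp; ring
  have id2 : (1 : ℂ) - (starRingEnd ℂ) (mo a w) * mo a z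
      = ((1 - (starRingEnd ℂ) a * a) * (1 - (starRingEnd ℂ) w * z)) / ((1 - a * (starRingEnd ℂ) w) * (1 - (starRingEnd ℂ) a * z)) := by
    simp only [mo, map_div₀, map_sub, map_mul, map_one, Complex.conj_conj]
    field_simp
    ring
  have habs : Complex.abs (1 - a * (starRingEnd ℂ) w) = Complex.abs (1 - (starRingEnd ℂ) a * w) := by
    rw [← Complex.abs_conj (1 - (starRingEnd ℂ) a * w)]
    congr 1
    simp only [map_sub, map_mul, Complex.conj_conj, map_one]
  rw [pd, id1, id2]
  simp only [map_div₀, map_mul]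
  rw [habs, pd_def, div_div_div_eq]
  have n1 : Complex.abs (1 - (starRingEnd ℂ) a * z) ≠ 0 := Complex.abs.ne_zero h1
  have n2 : Complex.abs (1 - (starRingEnd ℂ) a * w) ≠ 0 := Complex.abs.ne_zero h2
  have n3 : Complex.abs (1 - (starRingEnd ℂ) a * a) ≠ 0 := Complex.abs.ne_zero h3
  have n5 : Complex.abs (1 - (starRingEnd ℂ) w * z) ≠ 0 := Complex.abs.ne_zero h5
  have n1' : Complex.abs ((1 : ℂ) - z * (starRingEnd ℂ) a) ≠ 0 := by rwa [mul_comm]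
  have n2' : Complex.abs ((1 : ℂ) - w * (starRingEnd ℂ) a) ≠ 0 := by rwa [mul_comm]
  have n3' : Complex.abs ((1 : ℂ) - a * (starRingEnd ℂ) a) ≠ 0 := by rwa [mul_comm]
  have n5' : Complex.abs ((1 : ℂ) - z * (starRingEnd ℂ) w) ≠ 0 := by rwa [mul_comm]
  field_simp

lemma sharp0 {z w : ℂ} (hz : Complex.abs z < 1) (hw : Complex.abs w < 1) :
    pd z w ≤ (Complex.abs z + Complex.abs w) / (1 + Complex.abs z * Complex.abs w) := by
  set s := Complex.abs z with hs
  set t := Complex.abs w with ht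
  have hs0 : 0 ≤ s := Complex.abs.nonneg z
  have ht0 : 0 ≤ t := Complex.abs.nonneg w
  have hx : |(( starRingEnd ℂ) w * z).re| ≤ t * s := by
    calc |((starRingEnd ℂ) w * z).re| ≤ Complex.abs ((starRingEnd ℂ) w * z) := Complex.abs_re_le_abs _
      _ = t * s := by rw [map_mul, Complex.abs_conj]
  -- squared inequality
  have key : Complex.abs (z - w) * (1 + s * t) ≤ (s + t) * Complex.abs (1 - (starRingEnd ℂ) w * z) := by
    have hsq : (Complex.abs (z - w) * (1 + s * t)) ^ 2
        ≤ ((s + t) * Complex.abs (1 - (starRingEnd ℂ) w * z)) ^ 2 := by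
      rw [mul_pow, mul_pow, Complex.sq_abs, Complex.sq_abs]
      have e1 : Complex.normSq (z - w) = s ^ 2 + t ^ 2 - 2 * ((starRingEnd ℂ) w * z).re := by
        rw [Complex.normSq_sub]
        rw [← Complex.sq_abs, ← Complex.sq_abs]
        congr 1
        rw [mul_comm z ((starRingEnd ℂ) w)]
      have e2 : Complex.normSq (1 - (starRingEnd ℂ) w * z)
          = 1 + s ^ 2 * t ^ 2 - 2 * ((starRingEnd ℂ) w * z).re := by
        have := normSq_identity z w
        have e1' := e1
        rw [← Complex.sq_abs z, ← Complex.sq_abs w] at this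
        nlinarith [this, e1]
      rw [e1, e2]
      set x := ((starRingEnd ℂ) w * z).re
      have hxl : -(t * s) ≤ x := (abs_le.1 hx).1
      nlinarith [mul_nonneg (by linarith : (0:ℝ) ≤ x + t * s)
        (mul_nonneg (by nlinarith : (0:ℝ) ≤ 1 - s ^ 2) (by nlinarith : (0:ℝ) ≤ 1 - t ^ 2))]
    have h2 : 0 ≤ (s + t) * Complex.abs (1 - (starRingEnd ℂ) w * z) :=
      mul_nonneg (by linarith) (Complex.abs.nonneg _)
    nlinarith [mul_nonneg (Complex.abs.nonneg (z - w)) (by nlinarith : (0:ℝ) ≤ 1 + s * t)]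
  rw [pd_def]
  rw [div_le_div_iff₀ (denom_pos hz hw) (by nlinarith : (0:ℝ) < 1 + s * t)]
  linarith [key]

lemma mono2 {x c s R : ℝ} (hx0 : 0 ≤ x) (hc0 : 0 ≤ c) (hxs : x ≤ s) (hcR : c ≤ R)
    (hs1 : s ≤ 1) (hR1 : R ≤ 1) : (x + c) / (1 + x * c) ≤ (s + R) / (1 + s * R) := by
  rw [div_le_div_iff₀ (by nlinarith) (by nlinarith)]
  nlinarith [mul_nonneg (sub_nonneg.2 hxs) (by nlinarith : (0:ℝ) ≤ 1 - c * R),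
    mul_nonneg (sub_nonneg.2 hcR) (by nlinarith : (0:ℝ) ≤ 1 - s * x)]

lemma pd_le_add_abs {z w : ℂ} (hz : Complex.abs z < 1) (hw : Complex.abs w < 1) :
    pd z w ≤ Complex.abs z + Complex.abs w := by
  refine (sharp0 hz hw).trans ?_
  have h0 : 0 ≤ Complex.abs z + Complex.abs w :=
    add_nonneg (Complex.abs.nonneg _) (Complex.abs.nonneg _)
  have h1 : (1:ℝ) ≤ 1 + Complex.abs z * Complex.abs w := by
    nlinarith [Complex.abs.nonneg z, Complex.abs.nonneg w]
  calc (Complex.abs z + Complex.abs w) / (1 + Complex.abs z * Complex.abs w)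
      ≤ (Complex.abs z + Complex.abs w) / 1 := by
        apply div_le_div_of_nonneg_left h0 (by linarith) h1
    _ = Complex.abs z + Complex.abs w := by rw [div_one]

lemma pd_triangle {z v w : ℂ} (hz : Complex.abs z < 1) (hv : Complex.abs v < 1)
    (hw : Complex.abs w < 1) : pd z w ≤ pd z v + pd v w := by
  have h := pd_mobius hv hz hw
  rw [← h]
  refine (pd_le_add_abs (mo_mem hv hz) (mo_mem hv hw)).trans ?_
  rw [abs_mo, abs_mo, pd_symm w v]

lemma helper_sharp {X Y : ℂ} {s R : ℝ} (hX : Complex.abs X < 1) (hY : Complex.abs Y < 1)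
    (hpd : pd X Y ≤ s) (habs : Complex.abs Y ≤ R) (hs1 : s ≤ 1) (hR1 : R ≤ 1) :
    Complex.abs X ≤ (s + R) / (1 + s * R) := by
  have hXY := mo_mem hY hX
  have hmY : Complex.abs (-Y) < 1 := by rwa [Complex.abs.map_neg]
  have hXeq : X = mo (-Y) (mo Y X) := (mo_inv hY hX).symm
  calc Complex.abs X = Complex.abs (mo (-Y) (mo Y X)) := by rw [← hXeq]
    _ = pd (mo Y X) (-Y) := abs_mo _ _
    _ ≤ (Complex.abs (mo Y X) + Complex.abs (-Y)) / (1 + Complex.abs (mo Y X) * Complex.abs (-Y)) :=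
        sharp0 hXY hmY
    _ ≤ (s + R) / (1 + s * R) := by
        rw [Complex.abs.map_neg]
        exact mono2 (Complex.abs.nonneg _) (Complex.abs.nonneg _)
          (by rw [abs_mo]; exact hpd) habs hs1 hR1

lemma combo_lt_one {s R : ℝ} (hs0 : 0 ≤ s) (hs1 : s < 1) (hR0 : 0 ≤ R) (hR1 : R < 1) :
    (s + R) / (1 + s * R) < 1 := by
  rw [div_lt_one (by nlinarith)]
  nlinarith

lemma combo_nonneg {s R : ℝ} (hs0 : 0 ≤ s) (hR0 : 0 ≤ R) : 0 ≤ (s + R) / (1 + s * R) := by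
  apply div_nonneg (by linarith) (by nlinarith)

lemma pd_le_hdist {z w : ℂ} (hz : Complex.abs z < 1) (hw : Complex.abs w < 1) :
    pd z w ≤ hdist z w := by
  have hdef : hdist z w = Real.log ((1 + pd z w) / (1 - pd z w)) := by
    rw [hdist, artanh, pd, Complex.norm_eq_abs]; ring
  rw [hdef]
  set t := pd z w with ht
  have ht0 : 0 ≤ t := pd_nonneg z w
  have ht1 : t < 1 := pd_lt_one hz hw
  have h1 : Real.exp t ≤ (1 + t) / (1 - t) := by
    rw [le_div_iff₀ (by linarith)]
    have := Real.add_one_le_exp (-t)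
    have h2 : (1 - t) ≤ Real.exp (-t) := by linarith
    calc Real.exp t * (1 - t) ≤ Real.exp t * Real.exp (-t) := by
          apply mul_le_mul_of_nonneg_left h2 (Real.exp_nonneg t)
      _ = 1 := by rw [← Real.exp_add]; simp
      _ ≤ 1 + t := by linarith
  calc t = Real.log (Real.exp t) := (Real.log_exp t).symm
    _ ≤ Real.log ((1 + t) / (1 - t)) := Real.log_le_log (Real.exp_pos t) h1

lemma dist_le_two_pd {z w : ℂ} (hz : Complex.abs z < 1) (hw : Complex.abs w < 1) :
    dist z w ≤ 2 * pd z w := by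
  rw [Complex.dist_eq]
  have h : Complex.abs (z - w) = pd z w * Complex.abs (1 - (starRingEnd ℂ) w * z) := by
    rw [pd_def, div_mul_cancel₀]
    exact Complex.abs.ne_zero (denom_ne hz hw)
  rw [Complex.norm_eq_abs, h]
  have h2 : Complex.abs (1 - (starRingEnd ℂ) w * z) ≤ 2 := by
    refine abs_one_sub_le.trans ?_
    rw [map_mul, Complex.abs_conj]
    nlinarith [Complex.abs.nonneg w, Complex.abs.nonneg z]
  nlinarith [pd_nonneg z w]

lemma mapsTo_mo {a : ℂ} (ha : a ∈ unitDisc) : MapsTo (mo a) unitDisc unitDisc :=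
  fun z hz => mem_D.2 (mo_mem (mem_D.1 ha) (mem_D.1 hz))

/-- Schwarz–Pick inequality for the pseudo-hyperbolic distance. -/
lemma SP_pd {f : ℂ → ℂ} (hf : DifferentiableOn ℂ f unitDisc)
    (hm : MapsTo f unitDisc unitDisc) {z w : ℂ} (hz : z ∈ unitDisc) (hw : w ∈ unitDisc) :
    pd (f z) (f w) ≤ pd z w := by
  have hz' := mem_D.1 hz
  have hw' := mem_D.1 hw
  have hfw : f w ∈ unitDisc := hm hw
  have hmw : (-w) ∈ unitDisc := mem_D.2 (by rwa [Complex.abs.map_neg])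
  set φ : ℂ → ℂ := fun u => mo (f w) (f (mo (-w) u)) with hφ
  have hφd : DifferentiableOn ℂ φ unitDisc := by
    apply DifferentiableOn.comp (mo_diff (mem_D.1 hfw))
    · exact DifferentiableOn.comp hf (mo_diff (mem_D.1 hmw)) (mapsTo_mo hmw)
    · exact ((hm.comp (mapsTo_mo hmw)))
  have hφm : MapsTo φ unitDisc unitDisc :=
    (mapsTo_mo hfw).comp (hm.comp (mapsTo_mo hmw))
  have hφ0 : φ 0 = 0 := by
    have : mo (-w) 0 = w := by rw [mo_zero, neg_neg]
    rw [hφ]; simp only [this, mo_self]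
  have hSch : ∀ u ∈ unitDisc, Complex.abs (φ u) ≤ Complex.abs u := by
    intro u hu
    have hd' : DifferentiableOn ℂ φ (ball (0:ℂ) 1) := D_eq_ball ▸ hφd
    have hm' : MapsTo φ (ball (0:ℂ) 1) (ball (0:ℂ) 1) := D_eq_ball ▸ hφm
    exact Complex.abs_le_abs_of_mapsTo_ball_self hd' hm' hφ0 (mem_D.1 hu)
  have hu : mo w z ∈ unitDisc := mapsTo_mo hw hz
  have h1 := hSch (mo w z) hu
  have h2 : φ (mo w z) = mo (f w) (f z) := by
    rw [hφ]; simp only [mo_inv hw' hz']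
  rw [h2, abs_mo, abs_mo] at h1
  exact h1

lemma SP_prod {f : ℂ → ℂ} (hf : DifferentiableOn ℂ f unitDisc)
    (hm : MapsTo f unitDisc unitDisc) {z w : ℂ} (hz : z ∈ unitDisc) (hw : w ∈ unitDisc) :
    Complex.abs (f z - f w) ≤ pd z w * Complex.abs (1 - (starRingEnd ℂ) (f w) * f z) := by
  have h := SP_pd hf hm hz hw
  rw [pd_def] at h
  have hd : 0 < Complex.abs (1 - (starRingEnd ℂ) (f w) * f z) :=
    denom_pos (mem_D.1 (hm hz)) (mem_D.1 (hm hw))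
  calc Complex.abs (f z - f w)
      = Complex.abs (f z - f w) / Complex.abs (1 - (starRingEnd ℂ) (f w) * f z)
        * Complex.abs (1 - (starRingEnd ℂ) (f w) * f z) := by
        rw [div_mul_cancel₀]; exact ne_of_gt hd
    _ ≤ pd z w * Complex.abs (1 - (starRingEnd ℂ) (f w) * f z) :=
        mul_le_mul_of_nonneg_right h (Complex.abs.nonneg _)

/-- Schwarz–Pick for maps into the closed disc. -/
lemma SP_closed {f : ℂ → ℂ} (hf : DifferentiableOn ℂ f unitDisc)
    (hb : ∀ u ∈ unitDisc, Complex.abs (f u) ≤ 1) {z w : ℂ}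
    (hz : z ∈ unitDisc) (hw : w ∈ unitDisc) :
    Complex.abs (f z - f w) ≤ pd z w * Complex.abs (1 - (starRingEnd ℂ) (f w) * f z) := by
  by_cases hstrict : ∀ u ∈ unitDisc, Complex.abs (f u) < 1
  · exact SP_prod hf (fun u hu => mem_D.2 (hstrict u hu)) hz hw
  · push_neg at hstrict
    obtain ⟨u₀, hu₀, h1⟩ := hstrict
    have heq : Complex.abs (f u₀) = 1 := le_antisymm (hb u₀ hu₀) h1
    have hmax : IsMaxOn (norm ∘ f) unitDisc u₀ := by
      intro u hu
      simp only [Function.comp_apply, Complex.norm_eq_abs]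
      rw [heq]; exact hb u hu
    have hconst := Complex.eqOn_of_isPreconnected_of_isMaxOn_norm D_preconnected D_isOpen hf hu₀ hmax
    have hz' : f z = f u₀ := hconst hz
    have hw' : f w = f u₀ := hconst hw
    rw [hz', hw', sub_self, map_zero]
    exact mul_nonneg (pd_nonneg _ _) (Complex.abs.nonneg _)

lemma zero_mem_D : (0 : ℂ) ∈ unitDisc := by simp [unitDisc]

lemma schwarz_abs {f : ℂ → ℂ} (hf : DifferentiableOn ℂ f unitDisc)
    (hm : MapsTo f unitDisc unitDisc) (h0 : f 0 = 0) :
    ∀ u ∈ unitDisc, Complex.abs (f u) ≤ Complex.abs u := fun u hu =>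
  Complex.abs_le_abs_of_mapsTo_ball_self (D_eq_ball ▸ hf) (D_eq_ball ▸ hm) h0 (mem_D.1 hu)

lemma TP0 {b : ℂ} (hbD : b ∈ unitDisc) (hb0 : b ≠ 0) {r : ℝ} (hr0 : 0 ≤ r) (hr1 : r < 1) :
    ∃ C, 0 < C ∧ ∀ f : ℂ → ℂ, DifferentiableOn ℂ f unitDisc → MapsTo f unitDisc unitDisc →
      ∀ z ∈ unitDisc, Complex.abs z ≤ r →
        pd (f z) z ≤ C * (Complex.abs (f 0) + pd (f b) b) := by
  have hb' := mem_D.1 hbD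
  have htb0 : 0 < Complex.abs b := Complex.abs.pos hb0
  set ρ₁ : ℝ := (r + Complex.abs b) / (1 + r * Complex.abs b) with hρ₁def
  have hρ₁0 : 0 ≤ ρ₁ := combo_nonneg hr0 (Complex.abs.nonneg b)
  have hρ₁1 : ρ₁ < 1 := combo_lt_one hr0 hr1 (Complex.abs.nonneg b) hb'
  set κ : ℝ := (1 + ρ₁) / (1 - ρ₁) with hκdef
  have hκ0 : 0 < κ := div_pos (by linarith) (by linarith)
  set r₂ : ℝ := (1 + r) / 2 with hr₂def
  have hr₂1 : r₂ < 1 := by rw [hr₂def]; linarith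
  have hrr₂ : r ≤ r₂ := by rw [hr₂def]; linarith
  have hr₂0 : 0 ≤ r₂ := le_trans hr0 hrr₂
  set η : ℝ := (1 - r) / 2 with hηdef
  have hη0 : 0 < η := by rw [hηdef]; linarith
  set C₂ : ℝ := 4 / (1 - r₂) + 4 * κ / (Complex.abs b * (1 - r)) with hC₂def
  have hC₂0 : 0 < C₂ := by
    apply add_pos (div_pos (by norm_num) (by linarith))
    apply div_pos (by linarith) (mul_pos htb0 (by linarith))
  refine ⟨max (1 / η) C₂, lt_max_of_lt_left (div_pos one_pos hη0), ?_⟩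
  intro f hfd hfm z hzD hzr
  have hz' := mem_D.1 hzD
  set α := Complex.abs (f 0) with hα
  set β := pd (f b) b with hβ
  have hα0 : 0 ≤ α := Complex.abs.nonneg _
  have hβ0 : 0 ≤ β := pd_nonneg _ _
  have hfzD : f z ∈ unitDisc := hfm hzD
  by_cases hcase : η ≤ α
  · -- trivial case
    have h1 : pd (f z) z < 1 := pd_lt_one (mem_D.1 hfzD) hz'
    have h2 : (1:ℝ) ≤ (1 / η) * α := by
      rw [div_mul_eq_mul_div, le_div_iff₀ hη0, one_mul]; linarith
    calc pd (f z) z ≤ 1 := le_of_lt h1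
      _ ≤ (1 / η) * α := h2
      _ ≤ (1 / η) * (α + β) := by
          apply mul_le_mul_of_nonneg_left (by linarith) (le_of_lt (div_pos one_pos hη0))
      _ ≤ max (1 / η) C₂ * (α + β) := by
          apply mul_le_mul_of_nonneg_right (le_max_left _ _) (by linarith)
  · push_neg at hcase
    have hα12 : α < 1/2 := lt_of_lt_of_le hcase (by rw [hηdef]; linarith)
    set c := f 0 with hc
    have hcD : c ∈ unitDisc := hfm zero_mem_D
    have hc' : Complex.abs c = α := rfl
    set φ : ℂ → ℂ := fun u => mo c (f u) with hφdef
    have hφd : DifferentiableOn ℂ φ unitDisc :=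
      (mo_diff (mem_D.1 hcD)).comp hfd hfm
    have hφm : MapsTo φ unitDisc unitDisc := (mapsTo_mo hcD).comp hfm
    have hφ0 : φ 0 = 0 := by rw [hφdef]; simp only [← hc, mo_self]
    have hφabs : ∀ u ∈ unitDisc, Complex.abs (φ u) ≤ Complex.abs u :=
      schwarz_abs hφd hφm hφ0
    -- Euclidean bound on the Möbius displacement
    have moBound : ∀ w : ℂ, Complex.abs w ≤ 1 → Complex.abs (mo c w - w) ≤ 4 * α := by
      intro w hw1
      have hden : Complex.abs (1 - (starRingEnd ℂ) c * w) ≠ 0 := by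
        apply Complex.abs.ne_zero; apply one_sub_ne
        rw [map_mul, Complex.abs_conj, hc']
        nlinarith
      have hid : mo c w - w = ((starRingEnd ℂ) c * w ^ 2 - c) / (1 - (starRingEnd ℂ) c * w) := by
        rw [mo]
        have : (1 : ℂ) - (starRingEnd ℂ) c * w ≠ 0 := fun h => hden (by rw [h, map_zero])
        have this' : (1 : ℂ) - w * (starRingEnd ℂ) c ≠ 0 := by rwa [mul_comm]
        field_simp
        ring
      rw [hid, map_div₀]
      have hnum : Complex.abs ((starRingEnd ℂ) c * w ^ 2 - c) ≤ 2 * α := by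
        have tri := Complex.abs.add_le ((starRingEnd ℂ) c * w ^ 2) (-c)
        rw [← sub_eq_add_neg, Complex.abs.map_neg] at tri
        have h2 : Complex.abs ((starRingEnd ℂ) c * w ^ 2) ≤ α := by
          rw [map_mul, Complex.abs_conj, map_pow, hc']
          have hw2 : Complex.abs w ^ 2 ≤ 1 := by nlinarith [Complex.abs.nonneg w]
          nlinarith
        rw [hc'] at tri
        linarith
      have hden2 : 1 - α ≤ Complex.abs (1 - (starRingEnd ℂ) c * w) := by
        refine le_trans ?_ denom_lower
        rw [hc']
        nlinarith [Complex.abs.nonneg w]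
      have h12 : (0:ℝ) < 1 - α := by linarith
      calc Complex.abs ((starRingEnd ℂ) c * w ^ 2 - c) / Complex.abs (1 - (starRingEnd ℂ) c * w)
          ≤ (2 * α) / (1 - α) := div_le_div₀ (by positivity) hnum h12 hden2
        _ ≤ 4 * α := by rw [div_le_iff₀ h12]; nlinarith
    -- dslope function
    set ψ : ℂ → ℂ := dslope φ 0 with hψdef
    have hψd : DifferentiableOn ℂ ψ unitDisc :=
      (differentiableOn_dslope (D_isOpen.mem_nhds zero_mem_D)).mpr hφd
    have hψle : ∀ u ∈ unitDisc, Complex.abs (ψ u) ≤ 1 := by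
      intro u hu
      have hmball : MapsTo φ (ball (0:ℂ) 1) (ball (φ 0) 1) := by
        rw [hφ0]; exact D_eq_ball ▸ hφm
      have := Complex.norm_dslope_le_div_of_mapsTo_ball (D_eq_ball ▸ hφd) (hmball.mono_right ball_subset_closedBall)
        (show u ∈ ball (0:ℂ) 1 from D_eq_ball ▸ hu)
      simpa using this
    have hφψ : ∀ u : ℂ, φ u = u * ψ u := by
      intro u
      have := sub_smul_dslope φ 0 u
      rw [hφ0, sub_zero, sub_zero, smul_eq_mul] at this
      rw [hψdef, ← this]
    -- estimates at b
    have hfbD : f b ∈ unitDisc := hfm hbD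
    have hB1 : Complex.abs (φ b - f b) ≤ 4 * α := moBound (f b) (le_of_lt (mem_D.1 hfbD))
    have hfb_b : Complex.abs (f b - b) ≤ 2 * β := by
      have h : Complex.abs (f b - b) = β * Complex.abs (1 - (starRingEnd ℂ) b * f b) := by
        rw [hβ, pd_def, div_mul_cancel₀]
        exact Complex.abs.ne_zero (denom_ne (mem_D.1 hfbD) hb')
      rw [h]
      have h2 : Complex.abs (1 - (starRingEnd ℂ) b * f b) ≤ 2 := by
        refine abs_one_sub_le.trans ?_
        rw [map_mul, Complex.abs_conj]
        nlinarith [Complex.abs.nonneg b, Complex.abs.nonneg (f b), mem_D.1 hfbD]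
      nlinarith
    have hφb_b : Complex.abs (φ b - b) ≤ 4 * α + 2 * β := by
      calc Complex.abs (φ b - b) ≤ Complex.abs (φ b - f b) + Complex.abs (f b - b) := by
            simpa using Complex.abs.add_le (φ b - f b) (f b - b)
        _ ≤ 4 * α + 2 * β := add_le_add hB1 hfb_b
    have hψb1 : Complex.abs (ψ b - 1) ≤ (4 * α + 2 * β) / Complex.abs b := by
      have h : ψ b - 1 = (φ b - b) / b := by
        rw [eq_div_iff hb0, sub_mul, one_mul, mul_comm]
        rw [← hφψ b]
      rw [h, map_div₀, div_le_div_iff₀ htb0 htb0]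
      exact mul_le_mul_of_nonneg_right hφb_b (Complex.abs.nonneg b)
    -- Schwarz-Pick for ψ between z and b
    have hSPψ := SP_closed hψd hψle hzD hbD
    have hρz : pd z b ≤ ρ₁ :=
      (sharp0 hz' hb').trans (mono2 (Complex.abs.nonneg z) (Complex.abs.nonneg b) hzr
        (le_refl _) (le_of_lt hr1) (le_of_lt hb'))
    have hest : Complex.abs (1 - (starRingEnd ℂ) (ψ b) * ψ z)
        ≤ Complex.abs (1 - ψ b) + Complex.abs (1 - ψ z) := by
      have hid : (1 : ℂ) - (starRingEnd ℂ) (ψ b) * ψ z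
          = (1 - ψ z) + ψ z * (1 - (starRingEnd ℂ) (ψ b)) := by ring
      rw [hid]
      refine (Complex.abs.add_le _ _).trans ?_
      rw [map_mul]
      have h1 : Complex.abs (1 - (starRingEnd ℂ) (ψ b)) = Complex.abs (1 - ψ b) := by
        rw [← Complex.abs_conj (1 - (starRingEnd ℂ) (ψ b))]
        congr 1
        simp only [map_sub, map_one, Complex.conj_conj]
      rw [h1]
      have h2 : Complex.abs (ψ z) * Complex.abs (1 - ψ b) ≤ Complex.abs (1 - ψ b) := by
        nlinarith [hψle z hzD, Complex.abs.nonneg (ψ z), Complex.abs.nonneg (1 - ψ b)]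
      linarith
    have hchain : Complex.abs (1 - ψ z) ≤ κ * Complex.abs (1 - ψ b) := by
      have ht1 : Complex.abs (1 - ψ z) ≤ Complex.abs (1 - ψ b) + Complex.abs (ψ b - ψ z) := by
        calc Complex.abs (1 - ψ z) = Complex.abs ((1 - ψ b) + (ψ b - ψ z)) := by ring_nf
          _ ≤ _ := Complex.abs.add_le _ _
      have ht2 : Complex.abs (ψ b - ψ z) = Complex.abs (ψ z - ψ b) := Complex.abs.map_sub _ _
      have ht3 : Complex.abs (ψ z - ψ b)
          ≤ ρ₁ * (Complex.abs (1 - ψ b) + Complex.abs (1 - ψ z)) := by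
        refine hSPψ.trans ?_
        have := mul_le_mul hρz hest (Complex.abs.nonneg _) hρ₁0
        linarith
      have hnn : 0 ≤ Complex.abs (1 - ψ b) := Complex.abs.nonneg _
      rw [hκdef, div_mul_eq_mul_div, le_div_iff₀ (by linarith)]
      nlinarith
    -- from ψ back to φ and f
    have hφz_z : Complex.abs (φ z - z) ≤ κ * (4 * α + 2 * β) / Complex.abs b := by
      have hid : φ z - z = z * (ψ z - 1) := by rw [hφψ z]; ring
      rw [hid, map_mul]
      have h1 : Complex.abs (ψ z - 1) = Complex.abs (1 - ψ z) := Complex.abs.map_sub _ _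
      have h2 : Complex.abs (ψ b - 1) = Complex.abs (1 - ψ b) := Complex.abs.map_sub _ _
      have h3 : Complex.abs (1 - ψ b) ≤ (4 * α + 2 * β) / Complex.abs b := by rw [← h2]; exact hψb1
      have h4 : Complex.abs z * Complex.abs (ψ z - 1) ≤ Complex.abs (ψ z - 1) := by
        nlinarith [Complex.abs.nonneg (ψ z - 1), Complex.abs.nonneg z, hz']
      refine h4.trans ?_
      rw [h1]
      refine hchain.trans ?_
      rw [mul_div_assoc]
      exact mul_le_mul_of_nonneg_left h3 (le_of_lt hκ0)
    have hφzD : φ z ∈ unitDisc := hφm hzD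
    have hφzr : Complex.abs (φ z) ≤ r := le_trans (hφabs z hzD) hzr
    have hpdφz : pd (φ z) z ≤ κ * (4 * α + 2 * β) / (Complex.abs b * (1 - r)) := by
      rw [pd_def]
      have hden : 1 - r ≤ Complex.abs (1 - (starRingEnd ℂ) z * φ z) := by
        refine le_trans ?_ denom_lower
        nlinarith [Complex.abs.nonneg (φ z), Complex.abs.nonneg z, mem_D.1 hφzD]
      have hr1' : (0:ℝ) < 1 - r := by linarith
      calc Complex.abs (φ z - z) / Complex.abs (1 - (starRingEnd ℂ) z * φ z)
          ≤ (κ * (4 * α + 2 * β) / Complex.abs b) / (1 - r) :=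
            div_le_div₀ (by positivity) hφz_z hr1' hden
        _ = κ * (4 * α + 2 * β) / (Complex.abs b * (1 - r)) := by rw [div_div]
    -- |f z| ≤ r₂
    have hfzr₂ : Complex.abs (f z) ≤ r₂ := by
      have h1 : pd (f z) (f 0) ≤ pd z 0 := SP_pd hfd hfm hzD zero_mem_D
      rw [pd_zero_right] at h1
      have h2 : pd (f z) 0 ≤ pd (f z) c + pd c 0 :=
        pd_triangle (mem_D.1 hfzD) (mem_D.1 hcD) (by simpa using zero_lt_one)
      rw [pd_zero_right, pd_zero_right] at h2
      have h3 : pd (f z) c = pd (f z) (f 0) := rfl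
      rw [hr₂def]
      have := hcase
      calc Complex.abs (f z) ≤ pd (f z) c + Complex.abs c := h2
        _ ≤ r + α := by rw [h3, hc']; exact add_le_add (h1.trans hzr) (le_refl α)
        _ ≤ (1 + r) / 2 := by rw [hηdef] at hcase; linarith
    have hpdfφ : pd (f z) (φ z) ≤ 4 * α / (1 - r₂) := by
      rw [pd_def]
      have hnum : Complex.abs (f z - φ z) ≤ 4 * α := by
        rw [Complex.abs.map_sub]
        exact moBound (f z) (le_of_lt (mem_D.1 hfzD))
      have hden : 1 - r₂ ≤ Complex.abs (1 - (starRingEnd ℂ) (φ z) * f z) := by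
        refine le_trans ?_ denom_lower
        nlinarith [Complex.abs.nonneg (φ z), Complex.abs.nonneg (f z), mem_D.1 hφzD]
      exact div_le_div₀ (by positivity) hnum (by linarith) hden
    -- combine
    have htri : pd (f z) z ≤ pd (f z) (φ z) + pd (φ z) z :=
      pd_triangle (mem_D.1 hfzD) (mem_D.1 hφzD) hz'
    have hfinal : pd (f z) z ≤ C₂ * (α + β) := by
      rw [hC₂def]
      have e1 : 4 * α / (1 - r₂) ≤ 4 / (1 - r₂) * (α + β) := by
        have hB : (0:ℝ) < 1 - r₂ := by linarith
        have hnum1 : 4 * α ≤ 4 * (α + β) := by nlinarith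
        have h := mul_le_mul_of_nonneg_right hnum1 (inv_nonneg.2 hB.le)
        calc 4 * α / (1 - r₂) = 4 * α * (1 - r₂)⁻¹ := div_eq_mul_inv _ _
          _ ≤ 4 * (α + β) * (1 - r₂)⁻¹ := h
          _ = 4 / (1 - r₂) * (α + β) := by rw [div_eq_mul_inv]; ring
      have e2 : κ * (4 * α + 2 * β) / (Complex.abs b * (1 - r))
          ≤ 4 * κ / (Complex.abs b * (1 - r)) * (α + β) := by
        have hB : (0:ℝ) < Complex.abs b * (1 - r) := mul_pos htb0 (by linarith)
        have hnum2 : κ * (4 * α + 2 * β) ≤ 4 * κ * (α + β) := by nlinarith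
        have h := mul_le_mul_of_nonneg_right hnum2 (inv_nonneg.2 hB.le)
        calc κ * (4 * α + 2 * β) / (Complex.abs b * (1 - r))
            = κ * (4 * α + 2 * β) * (Complex.abs b * (1 - r))⁻¹ := div_eq_mul_inv _ _
          _ ≤ 4 * κ * (α + β) * (Complex.abs b * (1 - r))⁻¹ := h
          _ = 4 * κ / (Complex.abs b * (1 - r)) * (α + β) := by rw [div_eq_mul_inv]; ring
      calc pd (f z) z ≤ pd (f z) (φ z) + pd (φ z) z := htri
        _ ≤ 4 * α / (1 - r₂) + κ * (4 * α + 2 * β) / (Complex.abs b * (1 - r)) :=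
            add_le_add hpdfφ hpdφz
        _ ≤ 4 / (1 - r₂) * (α + β) + 4 * κ / (Complex.abs b * (1 - r)) * (α + β) :=
            add_le_add e1 e2
        _ = (4 / (1 - r₂) + 4 * κ / (Complex.abs b * (1 - r))) * (α + β) := by ring
    refine hfinal.trans ?_
    apply mul_le_mul_of_nonneg_right (le_max_right _ _) (by linarith)

lemma TP {a b : ℂ} (haD : a ∈ unitDisc) (hbD : b ∈ unitDisc) (hab : a ≠ b)
    {r : ℝ} (hr0 : 0 ≤ r) (hr1 : r < 1) :
    ∃ C, 0 < C ∧ ∀ f : ℂ → ℂ, DifferentiableOn ℂ f unitDisc → MapsTo f unitDisc unitDisc →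
      ∀ z ∈ unitDisc, Complex.abs z ≤ r →
        pd (f z) z ≤ C * (pd (f a) a + pd (f b) b) := by
  have ha' := mem_D.1 haD
  have hb' := mem_D.1 hbD
  have hmaD : (-a) ∈ unitDisc := mem_D.2 (by rwa [Complex.abs.map_neg])
  set b' : ℂ := mo a b with hb'def
  have hb'D : b' ∈ unitDisc := mem_D.2 (mo_mem ha' hb')
  have hb'0 : b' ≠ 0 := by
    intro h
    have h2 : pd b a = 0 := by rw [← abs_mo, ← hb'def, h, map_zero]
    exact hab ((pd_eq_zero_iff hb' ha').1 h2).symm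
  set r' : ℝ := (r + Complex.abs a) / (1 + r * Complex.abs a) with hr'def
  have hr'0 : 0 ≤ r' := combo_nonneg hr0 (Complex.abs.nonneg a)
  have hr'1 : r' < 1 := combo_lt_one hr0 hr1 (Complex.abs.nonneg a) ha'
  obtain ⟨C, hC0, hC⟩ := TP0 hb'D hb'0 hr'0 hr'1
  refine ⟨C, hC0, ?_⟩
  intro f hfd hfm z hzD hzr
  have hz' := mem_D.1 hzD
  -- conjugated map
  set f' : ℂ → ℂ := fun u => mo a (f (mo (-a) u)) with hf'def
  have hf'd : DifferentiableOn ℂ f' unitDisc :=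
    (mo_diff ha').comp (hfd.comp (mo_diff (mem_D.1 hmaD)) (mapsTo_mo hmaD))
      (hfm.comp (mapsTo_mo hmaD))
  have hf'm : MapsTo f' unitDisc unitDisc :=
    (mapsTo_mo haD).comp (hfm.comp (mapsTo_mo hmaD))
  set z' : ℂ := mo a z with hz'def
  have hz'D : z' ∈ unitDisc := mem_D.2 (mo_mem ha' hz')
  have hz'r : Complex.abs z' ≤ r' := by
    rw [hz'def, abs_mo]
    exact (sharp0 hz' ha').trans (mono2 (Complex.abs.nonneg z) (Complex.abs.nonneg a) hzr
      (le_refl _) (le_of_lt hr1) (le_of_lt ha'))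
  have key := hC f' hf'd hf'm z' hz'D hz'r
  -- translate the three quantities
  have t1 : f' z' = mo a (f z) := by
    rw [hf'def, hz'def]; simp only [mo_inv ha' hz']
  have t2 : pd (f' z') z' = pd (f z) z := by
    rw [t1, hz'def, pd_mobius ha' (mem_D.1 (hfm hzD)) hz']
  have t3 : Complex.abs (f' 0) = pd (f a) a := by
    have h0 : mo (-a) 0 = a := by rw [mo_zero, neg_neg]
    rw [hf'def]
    simp only [h0]
    rw [abs_mo]
  have t4 : pd (f' b') b' = pd (f b) b := by
    have hb2 : f' b' = mo a (f b) := by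
      rw [hf'def, hb'def]; simp only [mo_inv ha' hb']
    rw [hb2, hb'def, pd_mobius ha' (mem_D.1 (hfm hbD)) hb']
  rw [t2, t3, t4] at key
  exact key

lemma half_mem_D : (1/2 : ℂ) ∈ unitDisc := by
  rw [mem_D]
  rw [map_div₀]
  simp
  norm_num

/-- a holomorphic bijection of the disc has holomorphic inverse -/
lemma ginv_holo (g ginv : ℂ → ℂ)
    (hg : DifferentiableOn ℂ g unitDisc)
    (hgbij : BijOn g unitDisc unitDisc)
    (hinvmap : MapsTo ginv unitDisc unitDisc)
    (hinv : InvOn ginv g unitDisc unitDisc) :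
    DifferentiableOn ℂ ginv unitDisc := by
  have hana : AnalyticOnNhd ℂ g unitDisc := hg.analyticOnNhd D_isOpen
  have hinj : InjOn g unitDisc := hgbij.injOn
  -- no local constancy
  have h2pts : (0:ℂ) ∈ unitDisc ∧ (1/2 : ℂ) ∈ unitDisc ∧ (0:ℂ) ≠ (1/2 : ℂ) := by
    refine ⟨zero_mem_D, half_mem_D, by norm_num⟩
  -- local openness
  have hopen : ∀ z ∈ unitDisc, 𝓝 (g z) ≤ Filter.map g (𝓝 z) := by
    intro z hz
    rcases (hana z hz).eventually_constant_or_nhds_le_map_nhds with hconst | hle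
    · exfalso
      have heq : EqOn g (fun _ => g z) unitDisc :=
        hana.eqOn_of_preconnected_of_eventuallyEq analyticOnNhd_const D_preconnected hz hconst
      have : (0:ℂ) = (1/2:ℂ) := hinj h2pts.1 h2pts.2.1 (by rw [heq h2pts.1, heq h2pts.2.1])
      exact h2pts.2.2 this
    · exact hle
  have himg_mem : ∀ z ∈ unitDisc, ∀ V ∈ 𝓝 z, g '' V ∈ 𝓝 (g z) := by
    intro z hz V hV
    apply hopen z hz
    rw [Filter.mem_map]
    exact Filter.mem_of_superset hV (subset_preimage_image g V)
  -- continuity of ginv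
  have hcont : ∀ x ∈ unitDisc, ContinuousAt ginv x := by
    intro x hx
    rw [ContinuousAt, Filter.tendsto_def]
    intro V hV
    have hgx : ginv x ∈ unitDisc := hinvmap hx
    have hVD : V ∩ unitDisc ∈ 𝓝 (ginv x) := Filter.inter_mem hV (D_isOpen.mem_nhds hgx)
    have himg : g '' (V ∩ unitDisc) ∈ 𝓝 (g (ginv x)) := himg_mem _ hgx _ hVD
    rw [hinv.2 hx] at himg
    refine Filter.mem_of_superset himg ?_
    rintro _ ⟨v, ⟨hvV, hvD⟩, rfl⟩
    show ginv (g v) ∈ V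
    rw [hinv.1 hvD]
    exact hvV
  -- derivative of g is analytic
  have hderiv_ana : AnalyticOnNhd ℂ (deriv g) unitDisc := hana.deriv_of_isOpen D_isOpen
  -- deriv g not identically zero
  have hderiv_ne : ¬ (∀ x ∈ unitDisc, deriv g x = 0) := by
    intro hall
    have hconst : g 0 = g (1/2 : ℂ) := by
      apply Convex.is_const_of_fderivWithin_eq_zero (D_eq_ball ▸ convex_ball (0:ℂ) 1) hg
      · intro x hx
        rw [fderivWithin_of_isOpen D_isOpen hx]
        have hd : DifferentiableAt ℂ g x := (hg x hx).differentiableAt (D_isOpen.mem_nhds hx)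
        have hder : HasDerivAt g 0 x := by
          have := hd.hasDerivAt
          rwa [hall x hx] at this
        have := hder.hasFDerivAt.fderiv
        rw [this]
        ext y
        simp
      · exact h2pts.1
      · exact h2pts.2.1
    exact h2pts.2.2 (hinj h2pts.1 h2pts.2.1 hconst)
  -- isolated zeros of deriv g
  have hiso : ∀ s ∈ unitDisc, ∀ᶠ y in 𝓝[≠] s, deriv g y ≠ 0 := by
    intro s hs
    rcases (hderiv_ana s hs).eventually_eq_zero_or_eventually_ne_zero with hz | hnz
    · exfalso
      apply hderiv_ne
      intro x hx
      exact hderiv_ana.eqOn_zero_of_preconnected_of_eventuallyEq_zero D_preconnected hs hz hx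
    · exact hnz
  -- differentiability at points with nonvanishing derivative
  have hdiff_good : ∀ x ∈ unitDisc, deriv g (ginv x) ≠ 0 → DifferentiableAt ℂ ginv x := by
    intro x hx hne
    have hgx : ginv x ∈ unitDisc := hinvmap hx
    have hder : HasDerivAt g (deriv g (ginv x)) (ginv x) :=
      ((hg (ginv x) hgx).differentiableAt (D_isOpen.mem_nhds hgx)).hasDerivAt
    have hev : ∀ᶠ z in 𝓝 x, g (ginv z) = z :=
      Filter.eventually_of_mem (D_isOpen.mem_nhds hx) (fun z hz => hinv.2 hz)
    exact (HasDerivAt.of_local_left_inverse (hcont x hx) hder hne hev).differentiableAt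
  -- now handle the bad points via removable singularity
  intro x hx
  by_cases hne : deriv g (ginv x) ≠ 0
  · exact (hdiff_good x hx hne).differentiableWithinAt
  push_neg at hne
  set s₀ := ginv x with hs₀
  have hs₀D : s₀ ∈ unitDisc := hinvmap hx
  have hev1 : ∀ᶠ y in 𝓝 s₀, y ≠ s₀ → deriv g y ≠ 0 := by
    have := hiso s₀ hs₀D
    rwa [eventually_nhdsWithin_iff] at this
  have hev2 : ∀ᶠ z in 𝓝 x, (ginv z ≠ s₀ → deriv g (ginv z) ≠ 0) := (hcont x hx).eventually hev1
  have hev3 : ∀ᶠ z in 𝓝 x, z ∈ unitDisc ∧ (ginv z ≠ s₀ → deriv g (ginv z) ≠ 0) :=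
    Filter.eventually_and.mpr ⟨D_isOpen.mem_nhds hx, hev2⟩
  obtain ⟨ε, hε0, hball⟩ := Metric.eventually_nhds_iff_ball.1 hev3
  have hsub : DifferentiableOn ℂ ginv (ball x ε \ {x}) := by
    intro y hy
    obtain ⟨hyball, hyne⟩ := hy
    have h1 := hball y hyball
    have hyD : y ∈ unitDisc := h1.1
    have hyne' : ginv y ≠ s₀ := by
      intro h
      apply hyne
      have : g (ginv y) = g s₀ := by rw [h]
      rw [hinv.2 hyD, hs₀, hinv.2 hx] at this
      simpa using this
    exact (hdiff_good y hyD (h1.2 hyne')).differentiableWithinAt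
  have hfull : DifferentiableOn ℂ ginv (ball x ε) := by
    rw [← Complex.differentiableOn_compl_singleton_and_continuousAt_iff
      (c := x) (ball_mem_nhds x hε0)]
    exact ⟨hsub, hcont x hx⟩
  exact ((hfull x (mem_ball_self hε0)).differentiableAt
    (isOpen_ball.mem_nhds (mem_ball_self hε0))).differentiableWithinAt

lemma rightComp_succ (gs : ℕ → ℂ → ℂ) (n : ℕ) (z : ℂ) :
    rightComp gs (n + 1) z = rightComp gs n (gs n z) := rfl

lemma rightComp_zero (gs : ℕ → ℂ → ℂ) (z : ℂ) : rightComp gs 0 z = z := rfl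

lemma construct
    (g ginv : ℂ → ℂ)
    (hgd : DifferentiableOn ℂ g unitDisc) (hgm : MapsTo g unitDisc unitDisc)
    (hinvd : DifferentiableOn ℂ ginv unitDisc) (hinvm : MapsTo ginv unitDisc unitDisc)
    (hrinv : ∀ z ∈ unitDisc, g (ginv z) = z)
    (gs : ℕ → ℂ → ℂ) (hgsd : ∀ n, DifferentiableOn ℂ (gs n) unitDisc)
    (hgsm : ∀ n, MapsTo (gs n) unitDisc unitDisc)
    (c : ℕ → ℝ) (hc : Summable c)
    (a b : ℂ) (haD : a ∈ unitDisc) (hbD : b ∈ unitDisc) (hab : a ≠ b)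
    (hpt : ∀ n, pd (ginv (gs n a)) a + pd (ginv (gs n b)) b ≤ c n)
    (horb : ∀ r, 0 ≤ r → r < 1 → ∃ R, 0 ≤ R ∧ R < 1 ∧ ∀ z ∈ unitDisc, Complex.abs z ≤ r →
      ∀ n, Complex.abs (ginv^[n] z) ≤ R) :
    ∃ G : ℂ → ℂ,
      TendstoLocallyUniformlyOn (fun n z => rightComp gs n (ginv^[n] z)) G atTop unitDisc ∧
      DifferentiableOn ℂ G unitDisc ∧ MapsTo G unitDisc unitDisc ∧
      (∀ R C : ℝ, 0 ≤ R → R < 1 → 0 ≤ C →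
        (∀ f : ℂ → ℂ, DifferentiableOn ℂ f unitDisc → MapsTo f unitDisc unitDisc →
          ∀ z ∈ unitDisc, Complex.abs z ≤ R → pd (f z) z ≤ C * (pd (f a) a + pd (f b) b)) →
        ∀ z ∈ unitDisc, (∀ n, Complex.abs (ginv^[n] z) ≤ R) →
          pd (G z) z ≤ C * (∑' n, c n)) := by
  set F : ℕ → ℂ → ℂ := fun n z => rightComp gs n (ginv^[n] z) with hFdef
  have hcnn : ∀ n, 0 ≤ c n := fun n =>
    le_trans (add_nonneg (pd_nonneg _ _) (pd_nonneg _ _)) (hpt n)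
  -- iterate facts
  have hItd : ∀ n, DifferentiableOn ℂ (fun z => ginv^[n] z) unitDisc ∧
      MapsTo (fun z => ginv^[n] z) unitDisc unitDisc := by
    intro n
    induction n with
    | zero => simpa using ⟨differentiableOn_id, mapsTo_id unitDisc⟩
    | succ n ih =>
      constructor
      · have : (fun z => ginv^[n+1] z) = (fun z => ginv (ginv^[n] z)) := by
          funext z; rw [Function.iterate_succ_apply']
        rw [this]
        exact hinvd.comp ih.1 ih.2
      · intro z hz
        show ginv^[n+1] z ∈ unitDisc
        rw [Function.iterate_succ_apply']
        exact hinvm (ih.2 hz)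
  have hIterD : ∀ n, ∀ z ∈ unitDisc, ginv^[n] z ∈ unitDisc := fun n z hz => (hItd n).2 hz
  -- rightComp facts
  have hRC : ∀ n, DifferentiableOn ℂ (rightComp gs n) unitDisc ∧
      MapsTo (rightComp gs n) unitDisc unitDisc := by
    intro n
    induction n with
    | zero => exact ⟨differentiableOn_id, mapsTo_id unitDisc⟩
    | succ n ih =>
      have he : rightComp gs (n+1) = rightComp gs n ∘ gs n := rfl
      rw [he]
      exact ⟨ih.1.comp (hgsd n) (hgsm n), ih.2.comp (hgsm n)⟩
  have hFd : ∀ n, DifferentiableOn ℂ (F n) unitDisc := by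
    intro n
    exact (hRC n).1.comp (hItd n).1 (hItd n).2
  have hFD : ∀ n, ∀ z ∈ unitDisc, F n z ∈ unitDisc := by
    intro n z hz
    exact (hRC n).2 (hIterD n z hz)
  -- key estimate
  have key : ∀ (R C : ℝ), 0 ≤ C →
      (∀ f : ℂ → ℂ, DifferentiableOn ℂ f unitDisc → MapsTo f unitDisc unitDisc →
        ∀ z ∈ unitDisc, Complex.abs z ≤ R → pd (f z) z ≤ C * (pd (f a) a + pd (f b) b)) →
      ∀ z ∈ unitDisc, (∀ n, Complex.abs (ginv^[n] z) ≤ R) →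
      ∀ n, pd (F (n+1) z) (F n z) ≤ C * c n := by
    intro R C hC0 hTP z hz horbz n
    set w := ginv^[n+1] z with hwdef
    have hwD : w ∈ unitDisc := hIterD (n+1) z hz
    have hx : ginv^[n] z ∈ unitDisc := hIterD n z hz
    have hgw : g w = ginv^[n] z := by
      rw [hwdef, Function.iterate_succ_apply']
      exact hrinv _ hx
    have hgsw : gs n w ∈ unitDisc := hgsm n hwD
    have hgswD : ginv (gs n w) ∈ unitDisc := hinvm hgsw
    have e1 : F (n+1) z = rightComp gs n (gs n w) := rfl
    have e2 : F n z = rightComp gs n (g w) := by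
      show rightComp gs n (ginv^[n] z) = _
      rw [hgw]
    have step1 : pd (F (n+1) z) (F n z) ≤ pd (gs n w) (g w) := by
      rw [e1, e2]
      exact SP_pd (hRC n).1 (hRC n).2 hgsw (by rw [hgw]; exact hx)
    have step2 : pd (gs n w) (g w) = pd (g (ginv (gs n w))) (g w) := by
      rw [hrinv _ hgsw]
    have step3 : pd (g (ginv (gs n w))) (g w) ≤ pd (ginv (gs n w)) w :=
      SP_pd hgd hgm hgswD hwD
    have hfsd : DifferentiableOn ℂ (fun u => ginv (gs n u)) unitDisc :=
      hinvd.comp (hgsd n) (hgsm n)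
    have hfsm : MapsTo (fun u => ginv (gs n u)) unitDisc unitDisc :=
      hinvm.comp (hgsm n)
    have step4 : pd (ginv (gs n w)) w ≤ C * (pd (ginv (gs n a)) a + pd (ginv (gs n b)) b) :=
      hTP _ hfsd hfsm w hwD (horbz (n+1))
    have step5 : C * (pd (ginv (gs n a)) a + pd (ginv (gs n b)) b) ≤ C * c n :=
      mul_le_mul_of_nonneg_left (hpt n) hC0
    calc pd (F (n+1) z) (F n z) ≤ pd (gs n w) (g w) := step1
      _ = pd (g (ginv (gs n w))) (g w) := step2
      _ ≤ pd (ginv (gs n w)) w := step3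
      _ ≤ C * (pd (ginv (gs n a)) a + pd (ginv (gs n b)) b) := step4
      _ ≤ C * c n := step5
  -- telescoping
  have tele : ∀ z ∈ unitDisc, ∀ C : ℝ, 0 ≤ C → (∀ n, pd (F (n+1) z) (F n z) ≤ C * c n) →
      ∀ m n, m ≤ n → pd (F n z) (F m z) ≤ C * ∑ k ∈ Finset.Ico m n, c k := by
    intro z hz C hC0 hkey m n hmn
    induction n, hmn using Nat.le_induction with
    | base => simp [pd_self]
    | succ n hmn ih =>
      have t := pd_triangle (mem_D.1 (hFD (n+1) z hz)) (mem_D.1 (hFD n z hz))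
        (mem_D.1 (hFD m z hz))
      calc pd (F (n+1) z) (F m z) ≤ pd (F (n+1) z) (F n z) + pd (F n z) (F m z) := t
        _ ≤ C * c n + C * ∑ k ∈ Finset.Ico m n, c k := add_le_add (hkey n) ih
        _ = C * ∑ k ∈ Finset.Ico m (n+1), c k := by
            rw [Finset.sum_Ico_succ_top hmn]; ring
  -- per-point bound
  have hpoint : ∀ z ∈ unitDisc, ∃ C, 0 < C ∧ ∀ n, pd (F (n+1) z) (F n z) ≤ C * c n := by
    intro z hz
    obtain ⟨R, hR0, hR1, hRorb⟩ := horb (Complex.abs z) (Complex.abs.nonneg z) (mem_D.1 hz)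
    obtain ⟨C, hC0, hTP⟩ := TP haD hbD hab hR0 hR1
    exact ⟨C, hC0, key R C hC0.le hTP z hz (fun n => hRorb z hz (le_refl _) n)⟩
  -- Cauchy and limit
  have hdist_le : ∀ z ∈ unitDisc, ∀ C : ℝ, (∀ n, pd (F (n+1) z) (F n z) ≤ C * c n) →
      ∀ n, dist (F n z) (F (n+1) z) ≤ 2 * C * c n := by
    intro z hz C hkey n
    have h1 : dist (F n z) (F (n+1) z) ≤ 2 * pd (F (n+1) z) (F n z) := by
      rw [dist_comm]
      exact dist_le_two_pd (mem_D.1 (hFD (n+1) z hz)) (mem_D.1 (hFD n z hz))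
    have := hkey n
    linarith
  have hcauchy : ∀ z ∈ unitDisc, ∃ L, Tendsto (fun n => F n z) atTop (𝓝 L) := by
    intro z hz
    obtain ⟨C, hC0, hkey⟩ := hpoint z hz
    apply cauchySeq_tendsto_of_complete
    apply cauchySeq_of_dist_le_of_summable (fun n => 2 * C * c n)
      (hdist_le z hz C hkey)
    simpa [mul_assoc] using hc.mul_left (2 * C)
  choose! G hG using hcauchy
  -- tail tendsto 0
  have htail0 : Tendsto (fun m => ∑' k, c (m + k)) atTop (𝓝 0) := by
    have heq : (fun m => ∑' k, c (m + k)) = (fun m => ∑' k, c (k + m)) :=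
      funext fun m => tsum_congr fun k => by rw [add_comm]
    rw [heq]
    exact tendsto_sum_nat_add c
  -- uniform bound
  have hunif : ∀ r : ℝ, 0 ≤ r → r < 1 → ∃ C, 0 < C ∧ ∀ z ∈ unitDisc, Complex.abs z ≤ r →
      ∀ m, dist (F m z) (G z) ≤ 2 * C * (∑' k, c (m + k)) := by
    intro r hr0 hr1
    obtain ⟨R, hR0, hR1, hRorb⟩ := horb r hr0 hr1
    obtain ⟨C, hC0, hTP⟩ := TP haD hbD hab hR0 hR1
    refine ⟨C, hC0, fun z hz hzr m => ?_⟩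
    have hkey := key R C hC0.le hTP z hz (fun n => hRorb z hz hzr n)
    have := dist_le_tsum_of_dist_le_of_tendsto (fun n => 2 * C * c n)
      (hdist_le z hz C hkey) (by simpa [mul_assoc] using hc.mul_left (2 * C)) (hG z hz) m
    calc dist (F m z) (G z) ≤ ∑' k, 2 * C * c (m + k) := this
      _ = 2 * C * ∑' k, c (m + k) := tsum_mul_left
  -- TLU
  have hTLU : TendstoLocallyUniformlyOn F G atTop unitDisc := by
    rw [tendstoLocallyUniformlyOn_iff_forall_isCompact D_isOpen]
    intro K hKsub hK
    rcases K.eq_empty_or_nonempty with rfl | hne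
    · exact tendstoUniformlyOn_empty
    obtain ⟨z₀, hz₀K, hmax⟩ := hK.exists_isMaxOn hne Complex.continuous_abs.continuousOn
    have hr1 : Complex.abs z₀ < 1 := mem_D.1 (hKsub hz₀K)
    obtain ⟨C, hC0, hCb⟩ := hunif (Complex.abs z₀) (Complex.abs.nonneg z₀) hr1
    rw [Metric.tendstoUniformlyOn_iff]
    intro ε hε
    have h2 : Tendsto (fun m => 2 * C * (∑' k, c (m + k))) atTop (𝓝 0) := by
      simpa using htail0.const_mul (2 * C)
    filter_upwards [h2.eventually_lt_const hε] with m hm z hzK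
    have hzD := hKsub hzK
    have hzr : Complex.abs z ≤ Complex.abs z₀ := hmax hzK
    calc dist (G z) (F m z) = dist (F m z) (G z) := dist_comm _ _
      _ ≤ 2 * C * (∑' k, c (m + k)) := hCb z hzD hzr m
      _ < ε := hm
  -- MapsTo
  have hGm : MapsTo G unitDisc unitDisc := by
    intro z hz
    obtain ⟨C, hC0, hkey⟩ := hpoint z hz
    have h2 : Tendsto (fun m => C * (∑' k, c (m + k))) atTop (𝓝 0) := by
      simpa using htail0.const_mul C
    obtain ⟨m₀, hm₀⟩ := (h2.eventually_lt_const (by norm_num : (0:ℝ) < 1/2)).exists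
    have hpdbound : ∀ n, m₀ ≤ n → pd (F n z) (F m₀ z) ≤ 1/2 := by
      intro n hn
      have t1 := tele z hz C hC0.le hkey m₀ n hn
      have t2 : ∑ k ∈ Finset.Ico m₀ n, c k ≤ ∑' k, c (m₀ + k) := by
        rw [Finset.sum_Ico_eq_sum_range]
        have hsum : Summable fun k => c (m₀ + k) := by
          have := (summable_nat_add_iff m₀).2 hc
          exact this.congr fun k => by rw [add_comm]
        exact Summable.sum_le_tsum (Finset.range (n - m₀)) (fun i _ => hcnn _) hsum
      have := mul_le_mul_of_nonneg_left t2 hC0.le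
      linarith
    have hFm₀ : F m₀ z ∈ unitDisc := hFD m₀ z hz
    have hQ1 : (1/2 + Complex.abs (F m₀ z)) / (1 + (1/2) * Complex.abs (F m₀ z)) < 1 :=
      combo_lt_one (by norm_num) (by norm_num) (Complex.abs.nonneg _) (mem_D.1 hFm₀)
    have habsn : ∀ n, m₀ ≤ n → Complex.abs (F n z)
        ≤ (1/2 + Complex.abs (F m₀ z)) / (1 + (1/2) * Complex.abs (F m₀ z)) := fun n hn =>
      helper_sharp (mem_D.1 (hFD n z hz)) (mem_D.1 hFm₀) (hpdbound n hn) (le_refl _)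
        (by norm_num) (le_of_lt (mem_D.1 hFm₀))
    have habsG : Complex.abs (G z)
        ≤ (1/2 + Complex.abs (F m₀ z)) / (1 + (1/2) * Complex.abs (F m₀ z)) := by
      have htd : Tendsto (fun n => Complex.abs (F n z)) atTop (𝓝 (Complex.abs (G z))) :=
        (Complex.continuous_abs.continuousAt).tendsto.comp (hG z hz)
      exact le_of_tendsto htd (Filter.eventually_atTop.2 ⟨m₀, habsn⟩)
    exact mem_D.2 (lt_of_le_of_lt habsG hQ1)
  have hGd : DifferentiableOn ℂ G unitDisc :=
    hTLU.differentiableOn (Filter.Eventually.of_forall hFd) D_isOpen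
  refine ⟨G, hTLU, hGd, hGm, ?_⟩
  intro R C hR0 hR1 hC0 hTP z hz horbz
  have hkey := key R C hC0 hTP z hz horbz
  have hbound : ∀ n, pd (F n z) z ≤ C * ∑' k, c k := by
    intro n
    have t1 := tele z hz C hC0 hkey 0 n (Nat.zero_le n)
    have hF0 : F 0 z = z := rfl
    rw [hF0] at t1
    refine t1.trans (mul_le_mul_of_nonneg_left ?_ hC0)
    have heq : ∑ k ∈ Finset.Ico 0 n, c k = ∑ k ∈ Finset.range n, c k := by
      rw [Finset.range_eq_Ico]
    rw [heq]
    exact Summable.sum_le_tsum (Finset.range n) (fun i _ => hcnn i) hc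
  have hGz : G z ∈ unitDisc := hGm hz
  have hcontpd : ContinuousAt (fun X => pd X z) (G z) := by
    have hden : (1:ℂ) - (starRingEnd ℂ) z * G z ≠ 0 := denom_ne (mem_D.1 hGz) (mem_D.1 hz)
    have heq : (fun X => pd X z)
        = fun X => Complex.abs ((X - z) / (1 - (starRingEnd ℂ) z * X)) := rfl
    rw [heq]
    apply Complex.continuous_abs.continuousAt.comp
    apply ContinuousAt.div
    · exact (continuous_id.sub continuous_const).continuousAt
    · exact (continuous_const.sub (continuous_const.mul continuous_id)).continuousAt
    · exact hden
  exact le_of_tendsto (hcontpd.tendsto.comp (hG z hz)) (Filter.Eventually.of_forall hbound)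

lemma rightComp_facts (gs : ℕ → ℂ → ℂ) (hgsd : ∀ n, DifferentiableOn ℂ (gs n) unitDisc)
    (hgsm : ∀ n, MapsTo (gs n) unitDisc unitDisc) (n : ℕ) :
    DifferentiableOn ℂ (rightComp gs n) unitDisc ∧
      MapsTo (rightComp gs n) unitDisc unitDisc := by
  induction n with
  | zero => exact ⟨differentiableOn_id, mapsTo_id unitDisc⟩
  | succ n ih =>
    have he : rightComp gs (n+1) = rightComp gs n ∘ gs n := rfl
    rw [he]
    exact ⟨ih.1.comp (hgsd n) (hgsm n), ih.2.comp (hgsm n)⟩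

lemma iter_facts (ginv : ℂ → ℂ) (hinvd : DifferentiableOn ℂ ginv unitDisc)
    (hinvm : MapsTo ginv unitDisc unitDisc) (n : ℕ) :
    DifferentiableOn ℂ (fun z => ginv^[n] z) unitDisc ∧
      MapsTo (fun z => ginv^[n] z) unitDisc unitDisc := by
  induction n with
  | zero => simpa using ⟨differentiableOn_id, mapsTo_id unitDisc⟩
  | succ n ih =>
    constructor
    · have : (fun z => ginv^[n+1] z) = (fun z => ginv (ginv^[n] z)) := by
        funext z; rw [Function.iterate_succ_apply']
      rw [this]
      exact hinvd.comp ih.1 ih.2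
    · intro z hz
      show ginv^[n+1] z ∈ unitDisc
      rw [Function.iterate_succ_apply']
      exact hinvm (ih.2 hz)

lemma comp_nonconst {f h : ℂ → ℂ}
    (hfd : DifferentiableOn ℂ f unitDisc)
    (hhd : DifferentiableOn ℂ h unitDisc) (hhm : MapsTo h unitDisc unitDisc)
    (hh : ∃ z ∈ unitDisc, ∃ w ∈ unitDisc, h z ≠ h w)
    (hf : ∃ z ∈ unitDisc, ∃ w ∈ unitDisc, f z ≠ f w) :
    ∃ z ∈ unitDisc, ∃ w ∈ unitDisc, f (h z) ≠ f (h w) := by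
  by_contra hcon
  push_neg at hcon
  obtain ⟨z₁, hz₁, w₁, hw₁, hne⟩ := hh
  obtain ⟨z₂, hz₂, w₂, hw₂, hfne⟩ := hf
  have hana : AnalyticOnNhd ℂ h unitDisc := hhd.analyticOnNhd D_isOpen
  rcases (hana z₁ hz₁).eventually_constant_or_nhds_le_map_nhds with hconst | hle
  · have heq : EqOn h (fun _ => h z₁) unitDisc :=
      hana.eqOn_of_preconnected_of_eventuallyEq analyticOnNhd_const D_preconnected hz₁ hconst
    exact hne (by rw [heq hz₁, heq hw₁])
  · have himg : h '' unitDisc ∈ 𝓝 (h z₁) := by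
      apply hle
      rw [Filter.mem_map]
      exact Filter.mem_of_superset (D_isOpen.mem_nhds hz₁) (subset_preimage_image h unitDisc)
    have hev : f =ᶠ[𝓝 (h z₁)] (fun _ => f (h z₁)) := by
      filter_upwards [himg] with y hy
      obtain ⟨u, hu, rfl⟩ := hy
      exact hcon u hu z₁ hz₁
    have hfana : AnalyticOnNhd ℂ f unitDisc := hfd.analyticOnNhd D_isOpen
    have heqf : EqOn f (fun _ => f (h z₁)) unitDisc :=
      hfana.eqOn_of_preconnected_of_eventuallyEq analyticOnNhd_const D_preconnected (hhm hz₁) hev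
    exact hfne (by rw [heqf hz₂, heqf hw₂])

lemma rightComp_nonconst (gs : ℕ → ℂ → ℂ) (hgsd : ∀ n, DifferentiableOn ℂ (gs n) unitDisc)
    (hgsm : ∀ n, MapsTo (gs n) unitDisc unitDisc)
    (hnc : ∀ n, ∃ z ∈ unitDisc, ∃ w ∈ unitDisc, gs n z ≠ gs n w) (n : ℕ) :
    ∃ z ∈ unitDisc, ∃ w ∈ unitDisc, rightComp gs n z ≠ rightComp gs n w := by
  induction n with
  | zero =>
    refine ⟨0, zero_mem_D, 1/2, half_mem_D, ?_⟩
    show (0 : ℂ) ≠ 1/2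
    norm_num
  | succ n ih =>
    have he : ∀ z, rightComp gs (n+1) z = rightComp gs n (gs n z) := fun _ => rfl
    have := comp_nonconst (rightComp_facts gs hgsd hgsm n).1 (hgsd n) (hgsm n) (hnc n) ih
    obtain ⟨z, hz, w, hw, hne⟩ := this
    exact ⟨z, hz, w, hw, by rw [he z, he w]; exact hne⟩

/-- **Stability at the identity or an elliptic transformation, right compositions.**
Here "g is the identity or an elliptic Möbius transformation fixing 𝔻" is encoded as:
g is a conformal automorphism of 𝔻 with a fixed point in 𝔻; `ginv` is its inverse on 𝔻,
so that `ginv^[n]` is `g⁻ⁿ`. -/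
theorem stability_identity_elliptic_right
    (g ginv : ℂ → ℂ)
    (hg : DifferentiableOn ℂ g unitDisc) (hgmap : MapsTo g unitDisc unitDisc)
    (hgbij : BijOn g unitDisc unitDisc)
    (hfix : ∃ p ∈ unitDisc, g p = p)
    (hinvmap : MapsTo ginv unitDisc unitDisc)
    (hinv : InvOn ginv g unitDisc unitDisc)
    (gseq : ℕ → ℂ → ℂ)
    (hholo : ∀ n, DifferentiableOn ℂ (gseq n) unitDisc)
    (hself : ∀ n, MapsTo (gseq n) unitDisc unitDisc)
    (hnonconst : ∀ n, ∃ z ∈ unitDisc, ∃ w ∈ unitDisc, gseq n z ≠ gseq n w)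
    (a b : ℂ) (ha : a ∈ unitDisc) (hb : b ∈ unitDisc) (hab : a ≠ b)
    (hsa : Summable fun n => hdist (gseq n a) (g a))
    (hsb : Summable fun n => hdist (gseq n b) (g b)) :
    ∃ G : ℂ → ℂ, DifferentiableOn ℂ G unitDisc ∧ MapsTo G unitDisc unitDisc ∧
      (∃ z ∈ unitDisc, ∃ w ∈ unitDisc, G z ≠ G w) ∧
      TendstoLocallyUniformlyOn (fun n z => rightComp gseq n (ginv^[n] z)) G atTop unitDisc := by
  obtain ⟨p, hpD, hgp⟩ := hfix
  have hp' := mem_D.1 hpD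
  have hinvd : DifferentiableOn ℂ ginv unitDisc := ginv_holo g ginv hg hgbij hinvmap hinv
  have hrinv : ∀ z ∈ unitDisc, g (ginv z) = z := fun z hz => hinv.2 hz
  have hlinv : ∀ z ∈ unitDisc, ginv (g z) = z := fun z hz => hinv.1 hz
  have hginvp : ginv p = p := by
    conv_lhs => rw [← hgp]
    exact hlinv p hpD
  -- orbit bound
  have horb : ∀ r : ℝ, 0 ≤ r → r < 1 → ∃ R, 0 ≤ R ∧ R < 1 ∧ ∀ z ∈ unitDisc,
      Complex.abs z ≤ r → ∀ n, Complex.abs (ginv^[n] z) ≤ R := by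
    intro r hr0 hr1
    set s₀ : ℝ := (r + Complex.abs p) / (1 + r * Complex.abs p) with hs₀def
    have hs₀0 : 0 ≤ s₀ := combo_nonneg hr0 (Complex.abs.nonneg p)
    have hs₀1 : s₀ < 1 := combo_lt_one hr0 hr1 (Complex.abs.nonneg p) hp'
    refine ⟨(s₀ + Complex.abs p) / (1 + s₀ * Complex.abs p),
      combo_nonneg hs₀0 (Complex.abs.nonneg p),
      combo_lt_one hs₀0 hs₀1 (Complex.abs.nonneg p) hp', ?_⟩
    intro z hz hzr n
    have hit : ∀ m : ℕ, ginv^[m] z ∈ unitDisc ∧ pd (ginv^[m] z) p ≤ pd z p := by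
      intro m
      induction m with
      | zero => exact ⟨hz, le_refl _⟩
      | succ m ih =>
        have he : ginv^[m+1] z = ginv (ginv^[m] z) := Function.iterate_succ_apply' _ _ _
        constructor
        · rw [he]; exact hinvmap ih.1
        · rw [he]
          have h1 : pd (ginv (ginv^[m] z)) (ginv p) ≤ pd (ginv^[m] z) p :=
            SP_pd hinvd hinvmap ih.1 hpD
          rw [hginvp] at h1
          exact h1.trans ih.2
    have h2 : pd z p ≤ s₀ :=
      (sharp0 (mem_D.1 hz) hp').trans (mono2 (Complex.abs.nonneg z) (Complex.abs.nonneg p)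
        hzr (le_refl _) (le_of_lt hr1) (le_of_lt hp'))
    exact helper_sharp (mem_D.1 (hit n).1) hp' ((hit n).2.trans h2) (le_refl _)
      (le_of_lt hs₀1) (le_of_lt hp')
  -- summable control sequence
  set c : ℕ → ℝ := fun n => pd (ginv (gseq n a)) a + pd (ginv (gseq n b)) b with hcdef
  have hpt : ∀ n, pd (ginv (gseq n a)) a + pd (ginv (gseq n b)) b ≤ c n := fun n => le_refl _
  have hcle : ∀ n, c n ≤ hdist (gseq n a) (g a) + hdist (gseq n b) (g b) := by
    intro n
    have h1 : pd (ginv (gseq n a)) a ≤ hdist (gseq n a) (g a) := by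
      have e : pd (ginv (gseq n a)) a = pd (ginv (gseq n a)) (ginv (g a)) := by
        rw [hlinv a ha]
      rw [e]
      refine (SP_pd hinvd hinvmap (hself n ha) (hgmap ha)).trans ?_
      exact pd_le_hdist (mem_D.1 (hself n ha)) (mem_D.1 (hgmap ha))
    have h2 : pd (ginv (gseq n b)) b ≤ hdist (gseq n b) (g b) := by
      have e : pd (ginv (gseq n b)) b = pd (ginv (gseq n b)) (ginv (g b)) := by
        rw [hlinv b hb]
      rw [e]
      refine (SP_pd hinvd hinvmap (hself n hb) (hgmap hb)).trans ?_
      exact pd_le_hdist (mem_D.1 (hself n hb)) (mem_D.1 (hgmap hb))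
    rw [hcdef]
    exact add_le_add h1 h2
  have hcnn : ∀ n, 0 ≤ c n := fun n => add_nonneg (pd_nonneg _ _) (pd_nonneg _ _)
  have hcsum : Summable c := Summable.of_nonneg_of_le hcnn hcle (hsa.add hsb)
  -- main construction
  obtain ⟨G, hGtlu, hGd, hGm, hGclose⟩ := construct g ginv hg hgmap hinvd hinvmap hrinv
    gseq hholo hself c hcsum a b ha hb hab hpt horb
  refine ⟨G, hGd, hGm, ?_, hGtlu⟩
  -- ===== non-constancy =====
  have hdab0 : 0 < pd a b := by
    rcases lt_or_eq_of_le (pd_nonneg a b) with h | h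
    · exact h
    · exact absurd ((pd_eq_zero_iff (mem_D.1 ha) (mem_D.1 hb)).1 h.symm) hab
  set dab := pd a b with hdabdef
  -- constants for the pair a b
  have hrab1 : max (Complex.abs a) (Complex.abs b) < 1 :=
    max_lt (mem_D.1 ha) (mem_D.1 hb)
  have hrab0 : 0 ≤ max (Complex.abs a) (Complex.abs b) :=
    le_trans (Complex.abs.nonneg a) (le_max_left _ _)
  obtain ⟨R, hR0, hR1, hRorb⟩ := horb _ hrab0 hrab1
  obtain ⟨C, hC0, hTP⟩ := TP ha hb hab hR0 hR1
  -- choose N with small tail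
  have htail0 : Tendsto (fun m => C * ∑' k, c (m + k)) atTop (𝓝 0) := by
    have heq : (fun m => ∑' k, c (m + k)) = (fun m => ∑' k, c (k + m)) :=
      funext fun m => tsum_congr fun k => by rw [add_comm]
    have h1 : Tendsto (fun m => ∑' k, c (m + k)) atTop (𝓝 0) := by
      rw [heq]; exact tendsto_sum_nat_add c
    simpa using h1.const_mul C
  obtain ⟨N, hN⟩ := (htail0.eventually_lt_const
    (by positivity : (0:ℝ) < dab / 4)).exists
  -- shifted construction
  obtain ⟨H, hHtlu, hHd, hHm, hHclose⟩ := construct g ginv hg hgmap hinvd hinvmap hrinv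
    (fun k => gseq (N + k)) (fun k => hholo (N + k)) (fun k => hself (N + k))
    (fun k => c (N + k))
    (by
      have := (summable_nat_add_iff N).2 hcsum
      exact this.congr fun k => by rw [add_comm])
    a b ha hb hab (fun k => hpt (N + k)) horb
  -- the splitting identity
  have hsplit : ∀ m z, rightComp gseq (N + m) z
      = rightComp gseq N (rightComp (fun k => gseq (N + k)) m z) := by
    intro m
    induction m with
    | zero => intro z; rfl
    | succ m ih =>
      intro z
      have e1 : rightComp gseq (N + (m+1)) z = rightComp gseq (N + m) (gseq (N + m) z) := rfl
      rw [e1, ih (gseq (N + m) z)]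
      rfl
  have hFsplit : ∀ m z, rightComp gseq (N + m) (ginv^[N + m] z)
      = rightComp gseq N ((fun w => rightComp (fun k => gseq (N + k)) m (ginv^[m] w))
          (ginv^[N] z)) := by
    intro m z
    have e : ginv^[N + m] z = ginv^[m] (ginv^[N] z) := by
      rw [add_comm N m]
      exact Function.iterate_add_apply ginv m N z
    rw [e, hsplit m (ginv^[m] (ginv^[N] z))]
  -- limit identity : G = rightComp gseq N ∘ H ∘ ginv^[N] on the disc
  have hGid : ∀ z ∈ unitDisc, G z = rightComp gseq N (H (ginv^[N] z)) := by
    intro z hz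
    have hzN : ginv^[N] z ∈ unitDisc := (iter_facts ginv hinvd hinvmap N).2 hz
    have hHzN : H (ginv^[N] z) ∈ unitDisc := hHm hzN
    have h1 : Tendsto (fun n => rightComp gseq n (ginv^[n] z)) atTop (𝓝 (G z)) :=
      hGtlu.tendsto_at hz
    have h1' : Tendsto (fun m => rightComp gseq (N + m) (ginv^[N + m] z)) atTop (𝓝 (G z)) := by
      have hcomp : (fun m => rightComp gseq (N + m) (ginv^[N + m] z))
          = (fun n => rightComp gseq n (ginv^[n] z)) ∘ (fun m => m + N) := by
        funext m
        simp only [Function.comp_apply, add_comm N m]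
      rw [hcomp]
      exact h1.comp (tendsto_add_atTop_nat N)
    have h2 : Tendsto (fun m => rightComp (fun k => gseq (N + k)) m (ginv^[m] (ginv^[N] z)))
        atTop (𝓝 (H (ginv^[N] z))) := hHtlu.tendsto_at hzN
    have h3 : ContinuousAt (rightComp gseq N) (H (ginv^[N] z)) :=
      (((rightComp_facts gseq hholo hself N).1 _ hHzN).differentiableAt
        (D_isOpen.mem_nhds hHzN)).continuousAt
    have h4 : Tendsto (fun m => rightComp gseq N
        (rightComp (fun k => gseq (N + k)) m (ginv^[m] (ginv^[N] z)))) atTop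
        (𝓝 (rightComp gseq N (H (ginv^[N] z)))) := h3.tendsto.comp h2
    have h5 : (fun m => rightComp gseq N
        (rightComp (fun k => gseq (N + k)) m (ginv^[m] (ginv^[N] z))))
        = (fun m => rightComp gseq (N + m) (ginv^[N + m] z)) := by
      funext m
      exact (hFsplit m z).symm
    rw [h5] at h4
    exact tendsto_nhds_unique h1' h4
  -- H moves the orbit points of a and b only slightly
  set a' := ginv^[N] a with ha'def
  set b' := ginv^[N] b with hb'def
  have ha'D : a' ∈ unitDisc := (iter_facts ginv hinvd hinvmap N).2 ha
  have hb'D : b' ∈ unitDisc := (iter_facts ginv hinvd hinvmap N).2 hb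
  have horb_a : ∀ n, Complex.abs (ginv^[n] a') ≤ R := by
    intro n
    rw [ha'def, ← Function.iterate_add_apply ginv n N a]
    exact hRorb a ha (le_max_left _ _) (n + N)
  have horb_b : ∀ n, Complex.abs (ginv^[n] b') ≤ R := by
    intro n
    rw [hb'def, ← Function.iterate_add_apply ginv n N b]
    exact hRorb b hb (le_max_right _ _) (n + N)
  have hHa : pd (H a') a' ≤ C * ∑' k, c (N + k) :=
    hHclose R C hR0 hR1 hC0.le hTP a' ha'D horb_a
  have hHb : pd (H b') b' ≤ C * ∑' k, c (N + k) :=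
    hHclose R C hR0 hR1 hC0.le hTP b' hb'D horb_b
  -- orbit points stay far apart
  have hfar : dab ≤ pd a' b' := by
    rw [ha'def, hb'def]
    have : ∀ m : ℕ, pd a b ≤ pd (ginv^[m] a) (ginv^[m] b) := by
      intro m
      induction m with
      | zero => simp
      | succ m ih =>
        have hX : ginv^[m] a ∈ unitDisc := (iter_facts ginv hinvd hinvmap m).2 ha
        have hY : ginv^[m] b ∈ unitDisc := (iter_facts ginv hinvd hinvmap m).2 hb
        have e1 : ginv^[m+1] a = ginv (ginv^[m] a) := Function.iterate_succ_apply' _ _ _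
        have e2 : ginv^[m+1] b = ginv (ginv^[m] b) := Function.iterate_succ_apply' _ _ _
        rw [e1, e2]
        refine ih.trans ?_
        have h1 : pd (g (ginv (ginv^[m] a))) (g (ginv (ginv^[m] b)))
            ≤ pd (ginv (ginv^[m] a)) (ginv (ginv^[m] b)) :=
          SP_pd hg hgmap (hinvmap hX) (hinvmap hY)
        rwa [hrinv _ hX, hrinv _ hY] at h1
    exact this N
  -- conclude H a' ≠ H b'
  have hHne : H a' ≠ H b' := by
    intro heq
    have hHaD : H a' ∈ unitDisc := hHm ha'D
    have hHbD : H b' ∈ unitDisc := hHm hb'D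
    have t1 : pd a' b' ≤ pd a' (H a') + pd (H a') b' :=
      pd_triangle (mem_D.1 ha'D) (mem_D.1 hHaD) (mem_D.1 hb'D)
    have t2 : pd (H a') b' ≤ pd (H a') (H b') + pd (H b') b' :=
      pd_triangle (mem_D.1 hHaD) (mem_D.1 hHbD) (mem_D.1 hb'D)
    have t3 : pd (H a') (H b') = 0 := by rw [heq, pd_self]
    have t4 : pd a' (H a') = pd (H a') a' := pd_symm _ _
    have ht : pd a' b' ≤ pd (H a') a' + pd (H b') b' := by linarith
    have : dab ≤ 2 * (C * ∑' k, c (N + k)) := by linarith [hfar, hHa, hHb]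
    linarith [hN]
  -- G is nonconstant
  have hhd : DifferentiableOn ℂ (fun z => H (ginv^[N] z)) unitDisc :=
    hHd.comp (iter_facts ginv hinvd hinvmap N).1 (iter_facts ginv hinvd hinvmap N).2
  have hhm : MapsTo (fun z => H (ginv^[N] z)) unitDisc unitDisc :=
    hHm.comp (iter_facts ginv hinvd hinvmap N).2
  have hfnc := rightComp_nonconst gseq hholo hself hnonconst N
  have hhnc : ∃ z ∈ unitDisc, ∃ w ∈ unitDisc,
      (fun z => H (ginv^[N] z)) z ≠ (fun z => H (ginv^[N] z)) w :=
    ⟨a, ha, b, hb, hHne⟩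
  obtain ⟨z, hz, w, hw, hne⟩ := comp_nonconst (rightComp_facts gseq hholo hself N).1
    hhd hhm hhnc hfnc
  refine ⟨z, hz, w, hw, ?_⟩
  rw [hGid z hz, hGid w hw]
  exact hne
end

section
/- Let 0 < δ < 1/2. Then there exists a sequence of real numbers θ₁, θ₂, … such that each fₙ(z) = z/2 + δ·e^{iθₙ} is a holomorphic self-map of the open unit disc 𝔻, the sequence (fₙ) converges locally uniformly on 𝔻 to f(z) = z/2 (indeed each fₙ lies within hyperbolic distance bounds determined by δ of f), and for every z ∈ 𝔻 the sequence (Fₙ(z)) of left compositions Fₙ = fₙ ∘ fₙ₋₁ ∘ ⋯ ∘ f₁ does not converge. -/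
open Complex Set Filter Metric

/-- **Example 2.** For any 0 < δ < 1/2 there are angles θₙ such that the maps
fₙ(z) = z/2 + δe^{iθₙ} are holomorphic self-maps of 𝔻, each lying within (Euclidean,
hence hyperbolic) distance determined by δ of f(z) = z/2 on 𝔻, yet the left
compositions Fₙ = fₙ ∘ ⋯ ∘ f₁ diverge pointwise on 𝔻. (Indices are shifted: `θ k`
is the angle of f_{k+1}.) -/
theorem left_composition_instability_example
    (δ : ℝ) (hδ0 : 0 < δ) (hδ : δ < 1 / 2) :
    ∃ θ : ℕ → ℝ,
      (∀ n, MapsTo (fun z => z / 2 + (δ : ℂ) * Complex.exp (Complex.I * (θ n : ℂ)))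
        unitDisc unitDisc) ∧
      (∀ n, DifferentiableOn ℂ (fun z => z / 2 + (δ : ℂ) * Complex.exp (Complex.I * (θ n : ℂ)))
        unitDisc) ∧
      (∀ n, ∀ z ∈ unitDisc,
        dist (z / 2 + (δ : ℂ) * Complex.exp (Complex.I * (θ n : ℂ))) (z / 2) ≤ δ) ∧
      (∀ z ∈ unitDisc,
        ¬ ∃ L : ℂ, Tendsto
          (fun n => leftComp (fun k w => w / 2 + (δ : ℂ) * Complex.exp (Complex.I * (θ k : ℂ))) n z)
          atTop (nhds L)) := by
  refine ⟨fun n => n * Real.pi, ?_, ?_, ?_, ?_⟩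
  · -- MapsTo
    intro n z hz
    have he : Complex.exp (Complex.I * ((n * Real.pi : ℝ) : ℂ)) = (-1 : ℂ)^n := by
      push_cast
      rw [show Complex.I * (n * Real.pi) = n * (Real.pi * Complex.I) by ring,
        Complex.exp_nat_mul, Complex.exp_pi_mul_I]
    simp only [unitDisc, mem_setOf_eq] at hz ⊢
    calc ‖(z / 2 + (δ : ℂ) * Complex.exp (Complex.I * ((n * Real.pi : ℝ) : ℂ)))‖
        ≤ ‖(z / 2)‖ + ‖((δ : ℂ) * Complex.exp (Complex.I * ((n * Real.pi : ℝ) : ℂ)))‖ :=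
          norm_add_le _ _
      _ = ‖z‖ / 2 + δ := by
          rw [he]; simp [norm_div, abs_of_pos hδ0]
      _ < 1 / 2 + 1 / 2 := by linarith
      _ = 1 := by norm_num
  · -- differentiable
    intro n
    apply DifferentiableOn.add
    · exact (differentiable_id.div_const 2).differentiableOn
    · exact (differentiableOn_const _)
  · -- dist bound
    intro n z hz
    have : dist (z / 2 + (δ : ℂ) * Complex.exp (Complex.I * ((n * Real.pi : ℝ) : ℂ))) (z / 2)
        = ‖((δ : ℂ) * Complex.exp (Complex.I * ((n * Real.pi : ℝ) : ℂ)))‖ := by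
      rw [Complex.dist_eq]; ring_nf
    rw [this]
    have he : Complex.exp (Complex.I * ((n * Real.pi : ℝ) : ℂ)) = (-1 : ℂ)^n := by
      push_cast
      rw [show Complex.I * (n * Real.pi) = n * (Real.pi * Complex.I) by ring,
        Complex.exp_nat_mul, Complex.exp_pi_mul_I]
    rw [he]
    simp [abs_of_pos hδ0]
  · -- divergence
    intro z hz ⟨L, hL⟩
    set f : ℕ → ℂ → ℂ :=
      fun k w => w / 2 + (δ : ℂ) * Complex.exp (Complex.I * ((k * Real.pi : ℝ) : ℂ)) with hf
    have he : ∀ k : ℕ, Complex.exp (Complex.I * ((k * Real.pi : ℝ) : ℂ)) = (-1 : ℂ)^k := by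
      intro k
      push_cast
      rw [show Complex.I * (k * Real.pi) = k * (Real.pi * Complex.I) by ring,
        Complex.exp_nat_mul, Complex.exp_pi_mul_I]
    have hF : ∀ n, leftComp f n z
        = z * (1/2 : ℂ)^n + (δ : ℂ) * ((2 * (1/2 : ℂ)^n - (-1 : ℂ)^n * 2) / 3) := by
      intro n
      induction n with
      | zero => simp [leftComp]
      | succ n ih =>
        show f n (leftComp f n z) = _
        show (leftComp f n z) / 2 + (δ : ℂ) * Complex.exp (Complex.I * ((n * Real.pi : ℝ) : ℂ)) = _
        simp only [ih, he n]
        rw [pow_succ, pow_succ]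
        ring
    have h2n : Tendsto (fun n : ℕ => 2 * n) atTop atTop :=
      tendsto_atTop_atTop.mpr fun b => ⟨b, fun a ha => by omega⟩
    have h2n1 : Tendsto (fun n : ℕ => 2 * n + 1) atTop atTop :=
      tendsto_atTop_atTop.mpr fun b => ⟨b, fun a ha => by omega⟩
    have h4 : Tendsto (fun n : ℕ => ((1/4 : ℂ))^n) atTop (nhds 0) :=
      tendsto_pow_atTop_nhds_zero_of_norm_lt_one (by norm_num)
    -- even subsequence
    have heven : Tendsto (fun n => leftComp f (2*n) z) atTop
        (nhds (z * 0 + (δ : ℂ) * ((2 * 0 - 2) / 3))) := by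
      have : ∀ n, leftComp f (2*n) z
          = z * (1/4 : ℂ)^n + (δ : ℂ) * ((2 * (1/4 : ℂ)^n - 2) / 3) := by
        intro n
        rw [hF]
        rw [pow_mul, pow_mul]
        norm_num
      rw [funext this]
      exact ((h4.const_mul z).add
        ((((h4.const_mul 2).sub tendsto_const_nhds).div_const 3).const_mul (δ : ℂ)))
    have hodd : Tendsto (fun n => leftComp f (2*n+1) z) atTop
        (nhds ((z/2) * 0 + (δ : ℂ) * ((1 * 0 + 2) / 3))) := by
      have : ∀ n, leftComp f (2*n+1) z
          = (z/2) * (1/4 : ℂ)^n + (δ : ℂ) * ((1 * (1/4 : ℂ)^n + 2) / 3) := by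
        intro n
        rw [hF]
        rw [pow_succ, pow_succ, pow_mul, pow_mul]
        norm_num
        ring
      rw [funext this]
      exact ((h4.const_mul (z/2)).add
        ((((h4.const_mul 1).add tendsto_const_nhds).div_const 3).const_mul (δ : ℂ)))
    have e1 : z * 0 + (δ : ℂ) * ((2 * 0 - 2) / 3) = L :=
      tendsto_nhds_unique heven (hL.comp h2n)
    have e2 : (z/2) * 0 + (δ : ℂ) * ((1 * 0 + 2) / 3) = L :=
      tendsto_nhds_unique hodd (hL.comp h2n1)
    have : (δ : ℂ) = 0 := by
      rw [← e1] at e2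
      field_simp at e2
      have h4' : (δ:ℂ) * 4 = 0 := by linear_combination e2 / 2
      exact (mul_eq_zero.mp h4').resolve_right (by norm_num)
    simp only [Complex.ofReal_eq_zero] at this
    linarith
end
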